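/- arXiv:1205.2856 — 9 statements merged into one kernel-verified Lean document; each statement's English description precedes it below -/
import Mathlib

section
/- Let G be a graph with threshold assignment τ : V(G) → ℤ satisfying τ(v) ≤ deg(v) for all v. A subset D ⊆ V(G) is a τ-dynamic monopoly if and only if G \ D contains no resistant subgraph, where a subgraph K of G is resistant if for every vertex v of K, deg_K(v) ≥ deg_G(v) − τ(v) + 1. -/
open Finset

/-- `D` is a `τ`-dynamic monopoly for `G`: there is a partition
`D₀ ∪ D₁ ∪ ⋯ ∪ D_k` of the vertex set with `D₀ = D` such that every vertex `v ∈ D_{i+1}`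
has at least `τ v` neighbours in `D₀ ∪ ⋯ ∪ D_i`. -/
def DynMono {V : Type*} [Fintype V] [DecidableEq V] (G : SimpleGraph V) [DecidableRel G.Adj]
    (τ : V → ℤ) (D : Finset V) : Prop :=
  ∃ (k : ℕ) (Ds : ℕ → Finset V),
    Ds 0 = D ∧
    (∀ i ≤ k, ∀ j ≤ k, i ≠ j → Disjoint (Ds i) (Ds j)) ∧
    (Finset.range (k + 1)).biUnion Ds = Finset.univ ∧
    (∀ i < k, ∀ v ∈ Ds (i + 1),
      τ v ≤ ((((Finset.range (i + 1)).biUnion Ds).filter (fun u => G.Adj v u)).card : ℤ))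

/-- The induced subgraph of `G` on the vertex set `A` is `κ`-degenerate: the vertices of `A`
can be listed as `v₁, …, v_m` so that for each `i` the degree of `v_i` in the subgraph
induced on `{v₁, …, v_i}` is at most `κ v_i`. -/
def KDegenOn {V : Type*} [DecidableEq V] (G : SimpleGraph V) [DecidableRel G.Adj]
    (κ : V → ℕ) (A : Finset V) : Prop :=
  ∃ l : List V, l.Nodup ∧ l.toFinset = A ∧
    ∀ i : Fin l.length,
      ((l.take i).filter (fun u => decide (G.Adj (l.get i) u))).length ≤ κ (l.get i)

/-- `G` is `k`-degenerate: every nonempty subgraph of `G` has a vertex of degree at most `k`. -/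
def Degen {V : Type*} (G : SimpleGraph V) (k : ℕ) : Prop :=
  ∀ K : G.Subgraph, K.verts.Nonempty → ∃ v ∈ K.verts, (K.neighborSet v).ncard ≤ k

/-- The induced subgraph of `G` on the vertex set `A` is `k`-degenerate: every nonempty
subgraph of it (equivalently, every nonempty induced subgraph on some `S ⊆ A`) has a vertex
of degree at most `k`. -/
def DegenOn {V : Type*} (G : SimpleGraph V) [DecidableRel G.Adj] (k : ℕ) (A : Finset V) : Prop :=
  ∀ S ⊆ A, S.Nonempty → ∃ v ∈ S, (S.filter (fun u => G.Adj v u)).card ≤ k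

/-- A (nonempty) subgraph `K` of `G` is resistant w.r.t. the threshold assignment `τ` if
every vertex `v` of `K` satisfies `deg_K v ≥ deg_G v - τ v + 1`. -/
def Resistant {V : Type*} [Fintype V] (G : SimpleGraph V) [DecidableRel G.Adj]
    (τ : V → ℤ) (K : G.Subgraph) : Prop :=
  K.verts.Nonempty ∧ ∀ v ∈ K.verts, (G.degree v : ℤ) - τ v + 1 ≤ ((K.neighborSet v).ncard : ℤ)

theorem stmt1 {V : Type*} [Fintype V] [DecidableEq V] (G : SimpleGraph V) [DecidableRel G.Adj]
    (τ : V → ℤ) (hτ : ∀ v, τ v ≤ G.degree v) (D : Finset V) :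
    DynMono G τ D ↔
      ¬ ∃ K : G.Subgraph, Resistant G τ K ∧ ∀ v ∈ K.verts, v ∉ D := by
  classical
  constructor
  · rintro ⟨k, Ds, h0, hdisj, hcover, hstep⟩ ⟨K, ⟨hKne, hKres⟩, hKD⟩
    have hexists : ∃ n, n < k ∧ ∃ v, v ∈ K.verts ∧ v ∈ Ds (n + 1) := by
      obtain ⟨w, hw⟩ := hKne
      have hWm : w ∈ (Finset.range (k + 1)).biUnion Ds := by
        rw [hcover]; exact mem_univ w
      obtain ⟨j, hj, hwj⟩ := Finset.mem_biUnion.1 hWm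
      have hjk : j ≤ k := Nat.lt_succ_iff.mp (Finset.mem_range.mp hj)
      have hj0 : j ≠ 0 := by
        rintro rfl; rw [h0] at hwj; exact hKD w hw hwj
      obtain ⟨j', rfl⟩ := Nat.exists_eq_succ_of_ne_zero hj0
      exact ⟨j', Nat.lt_of_succ_le hjk, w, hw, hwj⟩
    set m := Nat.find hexists with hm
    obtain ⟨hmk, v, hvK, hvD⟩ := Nat.find_spec hexists
    have hτle := hstep m hmk v hvD
    set B := (Finset.range (m + 1)).biUnion Ds with hB
    have hBK : ∀ u ∈ B, u ∉ K.verts := by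
      intro u hu huK
      obtain ⟨i, hi, hui⟩ := Finset.mem_biUnion.1 hu
      have him : i ≤ m := Nat.lt_succ_iff.mp (Finset.mem_range.mp hi)
      match i, him with
      | 0, _ => rw [h0] at hui; exact hKD u huK hui
      | (i' + 1), him =>
        have hi'm : i' < m := Nat.lt_of_succ_le him
        exact Nat.find_min hexists hi'm ⟨lt_trans hi'm hmk, u, huK, hui⟩
    -- counting
    set Kn := (Set.toFinite (K.neighborSet v)).toFinset with hKn
    have hKncard : (K.neighborSet v).ncard = Kn.card := Set.ncard_eq_toFinset_card _ _
    have hsub1 : Kn ⊆ G.neighborFinset v := by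
      intro u hu
      rw [hKn, Set.Finite.mem_toFinset] at hu
      exact (SimpleGraph.mem_neighborFinset G v u).2 (K.adj_sub hu)
    have hsub2 : B.filter (fun u => G.Adj v u) ⊆ G.neighborFinset v := by
      intro u hu
      exact (SimpleGraph.mem_neighborFinset G v u).2 (Finset.mem_filter.1 hu).2
    have hdisj2 : Disjoint Kn (B.filter (fun u => G.Adj v u)) := by
      rw [Finset.disjoint_left]
      intro u hu hu2
      rw [hKn, Set.Finite.mem_toFinset] at hu
      exact hBK u (Finset.mem_filter.1 hu2).1 hu.snd_mem
    have hcard : Kn.card + (B.filter (fun u => G.Adj v u)).card ≤ G.degree v := by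
      rw [← SimpleGraph.card_neighborFinset_eq_degree, ← Finset.card_union_of_disjoint hdisj2]
      exact Finset.card_le_card (Finset.union_subset hsub1 hsub2)
    have hres := hKres v hvK
    rw [hKncard] at hres
    have : ((Kn.card : ℤ) + ((B.filter (fun u => G.Adj v u)).card : ℤ)) ≤ (G.degree v : ℤ) := by
      exact_mod_cast hcard
    linarith
  · intro hno
    -- infection process
    set step : Finset V → Finset V := fun M =>
      M ∪ Finset.univ.filter (fun v => τ v ≤ ((M.filter (fun u => G.Adj v u)).card : ℤ))
      with hstepdef
    set M : ℕ → Finset V := fun n => step^[n] D with hMdef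
    have hM0 : M 0 = D := rfl
    have hMsucc : ∀ n, M (n + 1) = step (M n) := fun n => Function.iterate_succ_apply' step n D
    have hmono1 : ∀ n, M n ⊆ M (n + 1) := by
      intro n; rw [hMsucc]; exact Finset.subset_union_left
    have hmono : ∀ a b, a ≤ b → M a ⊆ M b := by
      intro a b hab
      induction hab with
      | refl => exact subset_refl _
      | step h ih => exact subset_trans ih (hmono1 _)
    have hgrow : ∀ n, M n = Finset.univ ∨ (M n).card < (M (n + 1)).card := by
      intro n
      by_cases huniv : M n = Finset.univ
      · exact Or.inl huniv
      right
      apply Finset.card_lt_card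
      refine ⟨hmono1 n, ?_⟩
      intro hsub
      -- fixed point: build resistant subgraph on R
      set R := Finset.univ \ M n with hR
      have hRne : R.Nonempty := by
        rw [hR, Finset.sdiff_nonempty]
        intro h
        exact huniv (Finset.univ_subset_iff.mp h)
      have hRsmall : ∀ v ∈ R, ((M n).filter (fun u => G.Adj v u)).card < τ v := by
        intro v hv
        by_contra h
        push_neg at h
        have hvM1 : v ∈ M (n + 1) := by
          rw [hMsucc, hstepdef]
          exact Finset.mem_union_right _ (Finset.mem_filter.2 ⟨Finset.mem_univ v, h⟩)
        have : v ∈ M n := hsub hvM1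
        rw [hR, Finset.mem_sdiff] at hv
        exact hv.2 this
      apply hno
      refine ⟨{ verts := ↑R,
                Adj := fun a b => a ∈ R ∧ b ∈ R ∧ G.Adj a b,
                adj_sub := fun h => h.2.2,
                edge_vert := fun h => h.1,
                symm := ⟨fun a b h => ⟨h.2.1, h.1, h.2.2.symm⟩⟩ }, ⟨?_, ?_⟩, ?_⟩
      · exact ⟨hRne.choose, by simpa using hRne.choose_spec⟩
      · intro v hv
        simp only [Set.mem_setOf_eq, Finset.coe_sort_coe, Finset.mem_coe] at hv
        have hNeq : SimpleGraph.Subgraph.neighborSet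
            { verts := ↑R,
              Adj := fun a b => a ∈ R ∧ b ∈ R ∧ G.Adj a b,
              adj_sub := fun h => h.2.2,
              edge_vert := fun h => h.1,
              symm := ⟨fun a b h => ⟨h.2.1, h.1, h.2.2.symm⟩⟩ } v
            = ↑(R.filter (fun u => G.Adj v u)) := by
          ext u
          simp [SimpleGraph.Subgraph.neighborSet, hv]
        rw [hNeq, Set.ncard_coe_finset]
        have hdeg : G.degree v
            = ((M n).filter (fun u => G.Adj v u)).card
              + (R.filter (fun u => G.Adj v u)).card := by
          rw [← SimpleGraph.card_neighborFinset_eq_degree]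
          rw [← Finset.card_union_of_disjoint]
          · congr 1
            ext u
            simp only [SimpleGraph.mem_neighborFinset, Finset.mem_union, Finset.mem_filter,
              hR, Finset.mem_sdiff, Finset.mem_univ, true_and]
            constructor
            · intro h
              by_cases hu : u ∈ M n
              · exact Or.inl ⟨hu, h⟩
              · exact Or.inr ⟨hu, h⟩
            · rintro (⟨_, h⟩ | ⟨_, h⟩) <;> exact h
          · rw [Finset.disjoint_left]
            intro u hu hu2
            rw [Finset.mem_filter, hR, Finset.mem_sdiff] at hu2
            exact hu2.1.2 (Finset.mem_filter.1 hu).1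
        have hsm := hRsmall v hv
        have : (((M n).filter (fun u => G.Adj v u)).card : ℤ)
            + ((R.filter (fun u => G.Adj v u)).card : ℤ) = (G.degree v : ℤ) := by
          exact_mod_cast hdeg.symm
        linarith
      · intro v hv
        simp only [Finset.mem_coe] at hv
        rw [hR, Finset.mem_sdiff] at hv
        intro hvD
        exact hv.2 (hmono 0 n (Nat.zero_le n) (hM0 ▸ hvD))
    have hcardn : ∀ n, M n = Finset.univ ∨ n ≤ (M n).card := by
      intro n
      induction n with
      | zero => exact Or.inr (Nat.zero_le _)
      | succ n ih =>
        rcases hgrow n with h | h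
        · left; exact Finset.univ_subset_iff.mp (h ▸ hmono1 n)
        · rcases ih with h2 | h2
          · left; exact Finset.univ_subset_iff.mp (h2 ▸ hmono1 n)
          · right; omega
    have huniv : M (Fintype.card V) = Finset.univ := by
      rcases hcardn (Fintype.card V) with h | h
      · exact h
      · apply Finset.eq_univ_of_card
        have := Finset.card_le_univ (M (Fintype.card V))
        omega
    refine ⟨Fintype.card V, fun i => (match i with | 0 => D | (j+1) => M (j + 1) \ M j), rfl, ?_, ?_, ?_⟩
    · -- disjointness
      have key : ∀ i j : ℕ, i < j →
          Disjoint ((fun i => (match i with | 0 => D | (j+1) => M (j + 1) \ M j)) i)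
            ((fun i => (match i with | 0 => D | (j+1) => M (j + 1) \ M j)) j) := by
        intro i j hij
        obtain ⟨j', rfl⟩ := Nat.exists_eq_succ_of_ne_zero (by omega : j ≠ 0)
        rw [Finset.disjoint_left]
        intro u hu hu2
        have huMi : u ∈ M i := by
          cases i with
          | zero => exact hM0 ▸ hu
          | succ i' => exact (Finset.mem_sdiff.1 hu).1
        have : u ∈ M j' := hmono i j' (Nat.lt_succ_iff.mp hij) huMi
        exact (Finset.mem_sdiff.1 hu2).2 this
      intro i _ j _ hij
      rcases lt_or_gt_of_ne hij with h | h
      · exact key i j h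
      · exact (key j i h).symm
    all_goals {
      have hBi : ∀ n, (Finset.range (n + 1)).biUnion
          (fun i => (match i with | 0 => D | (j+1) => M (j + 1) \ M j)) = M n := by
        intro n
        induction n with
        | zero => simp [hM0]
        | succ n ih =>
          rw [Finset.range_add_one, Finset.biUnion_insert, ih]
          exact Finset.sdiff_union_of_subset (hmono1 n)
      first
      | (rw [hBi]; exact huniv)
      | { intro i _ v hv
          rw [hBi]
          have hv2 := Finset.mem_sdiff.1 hv
          have : v ∈ step (M i) := hMsucc i ▸ hv2.1
          rw [hstepdef] at this
          rcases Finset.mem_union.1 this with h | h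
          · exact absurd h hv2.2
          · exact (Finset.mem_filter.1 h).2 }
    }
end

section
/- Let G be a finite simple graph and let κ : V(G) → ℕ and τ : V(G) → ℤ satisfy τ(v) + κ(v) = deg_G(v) for every vertex v. Then a subset M ⊆ V(G) is a τ-dynamic monopoly if and only if the induced subgraph G \ M is κ-degenerate. -/
open Finset

section Helpers

variable {V : Type*} [Fintype V] [DecidableEq V]

lemma card_filter_compl_aux (p : V → Prop) [DecidablePred p] (S : Finset V) :
    (S.filter p).card + (Sᶜ.filter p).card = (univ.filter p).card := by
  rw [← Finset.card_union_of_disjoint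
    (Finset.disjoint_filter_filter disjoint_compl_right), ← Finset.filter_union,
    Finset.union_compl]

end Helpers

/-- Auxiliary: a "rank" function whose up-sets see few neighbours gives degeneracy. -/
lemma kdegen_of_rank {V : Type*} [DecidableEq V] (G : SimpleGraph V) [DecidableRel G.Adj]
    (κ : V → ℕ) (f : V → ℕ) :
    ∀ (n : ℕ) (A : Finset V), A.card = n →
      (∀ v ∈ A, ((A.filter (fun u => G.Adj v u ∧ f v ≤ f u)).card ≤ κ v)) →
      ∃ l : List V, l.Nodup ∧ l.toFinset = A ∧
        ∀ i : Fin l.length,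
          ((l.take i).filter (fun u => decide (G.Adj (l.get i) u))).length ≤ κ (l.get i) := by
  intro n
  induction n with
  | zero =>
    intro A hA _
    refine ⟨[], List.nodup_nil, ?_, ?_⟩
    · simp [Finset.card_eq_zero.mp hA]
    · intro i; exact absurd i.isLt (by simp)
  | succ n ih =>
    intro A hA hcond
    have hne : A.Nonempty := Finset.card_pos.mp (by omega)
    obtain ⟨v, hv, hmin⟩ := Finset.exists_min_image A f hne
    obtain ⟨l', hnd, hto, hdeg⟩ := ih (A.erase v) (by rw [Finset.card_erase_of_mem hv]; omega)
      (by
        intro u hu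
        refine le_trans (Finset.card_le_card ?_) (hcond u (Finset.mem_of_mem_erase hu))
        exact Finset.filter_subset_filter _ (Finset.erase_subset _ _))
    have hvl' : v ∉ l' := by
      intro hvm
      have : v ∈ A.erase v := hto ▸ List.mem_toFinset.mpr hvm
      simp at this
    refine ⟨l' ++ [v], ?_, ?_, ?_⟩
    · simp only [List.nodup_append, List.nodup_cons, List.nodup_nil, and_true]
      exact ⟨hnd, by simp, by simp; intro a ha hav; exact hvl' (hav ▸ ha)⟩
    · have h2 : (l' ++ [v]).toFinset = A.erase v ∪ {v} := by simp [hto]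
      rw [h2, Finset.union_comm, ← Finset.insert_eq, Finset.insert_erase hv]
    · intro i
      have hlen : (l' ++ [v]).length = l'.length + 1 := by simp
      by_cases hi : (i : ℕ) < l'.length
      · have hget : (l' ++ [v]).get i = l'.get ⟨i, hi⟩ := by
          rw [List.get_eq_getElem, List.get_eq_getElem, List.getElem_append_left hi]
        have htake : (l' ++ [v]).take i = l'.take i := List.take_append_of_le_length (le_of_lt hi)
        rw [hget, htake]
        exact hdeg ⟨i, hi⟩
      · have hival : (i : ℕ) = l'.length := by
          have h2 := i.isLt
          simp only [List.length_append, List.length_cons, List.length_nil] at h2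
          omega
        have hget : (l' ++ [v]).get i = v := by
          have : (l' ++ [v])[(i : ℕ)] = v := by
            rw [List.getElem_append_right (le_of_eq hival.symm)]
            simp [hival]
          simpa using this
        have htake : (l' ++ [v]).take i = l' := by
          rw [hival, List.take_append_of_le_length le_rfl, List.take_length]
        rw [hget, htake]
        have hnodupf := hnd.filter (fun u => decide (G.Adj v u))
        rw [← List.toFinset_card_of_nodup hnodupf, List.toFinset_filter]
        calc (l'.toFinset.filter (fun x => decide (G.Adj v x) = true)).card
            ≤ (A.filter (fun u => G.Adj v u ∧ f v ≤ f u)).card := by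
              apply Finset.card_le_card
              intro u hu
              simp only [Finset.mem_filter, decide_eq_true_eq] at hu ⊢
              obtain ⟨hu1, hu2⟩ := hu
              rw [hto] at hu1
              exact ⟨Finset.mem_of_mem_erase hu1, hu2, hmin u (Finset.mem_of_mem_erase hu1)⟩
          _ ≤ κ v := hcond v hv

theorem stmt2 {V : Type*} [Fintype V] [DecidableEq V] (G : SimpleGraph V) [DecidableRel G.Adj]
    (κ : V → ℕ) (τ : V → ℤ) (h : ∀ v, τ v + κ v = G.degree v) (M : Finset V) :
    DynMono G τ M ↔ KDegenOn G κ Mᶜ := by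
  have hdegcard : ∀ v : V, (univ.filter (fun u => G.Adj v u)).card = G.degree v := by
    intro v; rw [← SimpleGraph.neighborFinset_eq_filter]; rfl
  constructor
  · rintro ⟨k, Ds, h0, hdisj, hcover, hthr⟩
    have hex : ∀ v : V, ∃ j, j ≤ k ∧ v ∈ Ds j := by
      intro v
      have : v ∈ (Finset.range (k + 1)).biUnion Ds := hcover ▸ Finset.mem_univ v
      obtain ⟨j, hj, hjv⟩ := Finset.mem_biUnion.mp this
      exact ⟨j, by simpa using Nat.lt_succ_iff.mp (Finset.mem_range.mp hj), hjv⟩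
    have hex' : ∀ v : V, ∃ j, v ∈ Ds j := fun v => ⟨(hex v).choose, (hex v).choose_spec.2⟩
    let f : V → ℕ := fun v => Nat.find (hex' v)
    have hfmem : ∀ v, v ∈ Ds (f v) := fun v => Nat.find_spec (hex' v)
    have hfle : ∀ v, f v ≤ k := by
      intro v
      obtain ⟨j, hj, hjv⟩ := hex v
      exact le_trans (Nat.find_min' (hex' v) hjv) hj
    have huniq : ∀ v j, j ≤ k → v ∈ Ds j → j = f v := by
      intro v j hj hjv
      by_contra hne
      exact (Finset.disjoint_left.mp (hdisj j hj (f v) (hfle v) hne) hjv) (hfmem v)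
    apply kdegen_of_rank G κ f (Mᶜ.card) Mᶜ rfl
    intro v hv
    have hf1 : 1 ≤ f v := by
      rcases Nat.eq_zero_or_pos (f v) with h0' | h0'
      · exfalso
        have : v ∈ M := h0 ▸ (h0' ▸ hfmem v)
        exact (Finset.mem_compl.mp hv) this
      · exact h0'
    have hik : f v - 1 < k := by have := hfle v; omega
    have hthr' := hthr (f v - 1) hik v (by
      have : f v - 1 + 1 = f v := by omega
      rw [this]; exact hfmem v)
    set B : Finset V := (Finset.range (f v - 1 + 1)).biUnion Ds with hB
    have hsub : Mᶜ.filter (fun u => G.Adj v u ∧ f v ≤ f u) ⊆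
        (univ.filter (fun u => G.Adj v u)) \ (B.filter (fun u => G.Adj v u)) := by
      intro u hu
      simp only [Finset.mem_filter, Finset.mem_sdiff, Finset.mem_univ, true_and] at hu ⊢
      obtain ⟨_, hadj, hfu⟩ := hu
      refine ⟨hadj, ?_⟩
      rintro ⟨huB, -⟩
      obtain ⟨m, hm, hmu⟩ := Finset.mem_biUnion.mp huB
      rw [Finset.mem_range] at hm
      have hmk : m ≤ k := by omega
      have := huniq u m hmk hmu
      omega
    have hBsub : B.filter (fun u => G.Adj v u) ⊆ univ.filter (fun u => G.Adj v u) := by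
      apply Finset.filter_subset_filter; exact Finset.subset_univ _
    have hcard : (Mᶜ.filter (fun u => G.Adj v u ∧ f v ≤ f u)).card ≤
        G.degree v - (B.filter (fun u => G.Adj v u)).card := by
      calc (Mᶜ.filter (fun u => G.Adj v u ∧ f v ≤ f u)).card
          ≤ ((univ.filter (fun u => G.Adj v u)) \ (B.filter (fun u => G.Adj v u))).card :=
            Finset.card_le_card hsub
        _ = G.degree v - (B.filter (fun u => G.Adj v u)).card := by
            rw [Finset.card_sdiff_of_subset hBsub, hdegcard]
    have hBle : (B.filter (fun u => G.Adj v u)).card ≤ G.degree v := by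
      rw [← hdegcard]; exact Finset.card_le_card hBsub
    have hτ := h v
    omega
  · rintro ⟨l, hnd, hto, hdeg⟩
    set n := l.length with hn
    have hton : ∀ x ∈ l, x ∉ M := by
      intro x hx
      exact Finset.mem_compl.mp (hto ▸ List.mem_toFinset.mpr hx)
    set D : ℕ → Finset V := fun i => if hcond : 1 ≤ i ∧ i ≤ n then {l.get ⟨n - i, by omega⟩}
      else if i = 0 then M else ∅ with hD
    have hD0 : D 0 = M := by simp [hD]
    have hDpos : ∀ i (h1 : 1 ≤ i) (h2 : i ≤ n), D i = {l.get ⟨n - i, by omega⟩} := by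
      intro i h1 h2
      simp only [hD]
      rw [dif_pos ⟨h1, h2⟩]
    refine ⟨n, D, hD0, ?_, ?_, ?_⟩
    · intro i hi j hj hne
      by_cases hi0 : i = 0
      · subst hi0
        have hj1 : 1 ≤ j := by omega
        rw [hD0, hDpos j hj1 hj, Finset.disjoint_singleton_right]
        exact hton _ (List.get_mem l _)
      · by_cases hj0 : j = 0
        · subst hj0
          have hi1 : 1 ≤ i := by omega
          rw [hD0, hDpos i hi1 hi, Finset.disjoint_singleton_left]
          exact hton _ (List.get_mem l _)
        · have hi1 : 1 ≤ i := by omega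
          have hj1 : 1 ≤ j := by omega
          rw [hDpos i hi1 hi, hDpos j hj1 hj,
            Finset.disjoint_singleton_left, Finset.mem_singleton]
          intro heq
          have := (hnd.get_inj_iff).mp heq
          simp only [Fin.mk.injEq] at this
          omega
    · ext x
      simp only [Finset.mem_biUnion, Finset.mem_univ, iff_true, Finset.mem_range]
      by_cases hxM : x ∈ M
      · exact ⟨0, by omega, hD0 ▸ hxM⟩
      · have hxl : x ∈ l := by
          rw [← List.mem_toFinset, hto]
          exact Finset.mem_compl.mpr hxM
        obtain ⟨⟨m, hm⟩, hget⟩ := List.mem_iff_get.mp hxl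
        refine ⟨n - m, by omega, ?_⟩
        rw [hDpos (n - m) (by omega) (by omega), Finset.mem_singleton, ← hget]
        congr 1
        exact Fin.ext (by simp; omega)
    · intro i hi v hv
      rw [hDpos (i + 1) (by omega) (by omega), Finset.mem_singleton] at hv
      have hjn : n - (i + 1) < n := by omega
      have hvget : v = l.get ⟨(n - (i + 1)), hjn⟩ := hv
      have hvv : l[n - (i + 1)]'hjn = v := hvget.symm
      set B : Finset V := (Finset.range (i + 1)).biUnion D with hB
      set T : Finset V := (l.take ((n - (i + 1)) + 1)).toFinset with hT
      have hBT : B = Tᶜ := by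
        ext u
        simp only [hB, hT, Finset.mem_biUnion, Finset.mem_range, Finset.mem_compl,
          List.mem_toFinset]
        constructor
        · rintro ⟨m, hm, hmu⟩ hutake
          obtain ⟨⟨q, hq⟩, hqu⟩ := List.mem_iff_get.mp (List.mem_of_mem_take hutake)
          have hqlt : q < (n - (i + 1)) + 1 := by
            by_contra hqge
            push_neg at hqge
            obtain ⟨⟨p, hp⟩, hpu⟩ := List.mem_iff_get.mp hutake
            have hp' : p < (n - (i + 1)) + 1 := by
              have := hp; simp [List.length_take] at this; omega
            have hgetp : (l.take ((n - (i + 1))+1)).get ⟨p, hp⟩ = l.get ⟨p, by omega⟩ := by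
              simp [List.get_eq_getElem, List.getElem_take]
            have : l.get ⟨p, by omega⟩ = l.get ⟨q, hq⟩ := by
              rw [← hgetp, hpu, hqu]
            have := (hnd.get_inj_iff).mp this
            simp only [Fin.mk.injEq] at this
            omega
          by_cases hm0 : m = 0
          · subst hm0
            rw [hD0] at hmu
            exact hton u (List.mem_of_mem_take hutake) hmu
          · rw [hDpos m (by omega) (by omega), Finset.mem_singleton] at hmu
            have : l.get ⟨n - m, by omega⟩ = l.get ⟨q, hq⟩ := by rw [hqu]; exact hmu.symm
            have := (hnd.get_inj_iff).mp this
            simp only [Fin.mk.injEq] at this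
            omega
        · intro hutake
          by_cases huM : u ∈ M
          · exact ⟨0, by omega, hD0 ▸ huM⟩
          · have hul : u ∈ l := by
              rw [← List.mem_toFinset, hto]; exact Finset.mem_compl.mpr huM
            obtain ⟨⟨p, hp⟩, hpu⟩ := List.mem_iff_get.mp hul
            have hpge : (n - (i + 1)) + 1 ≤ p := by
              by_contra hplt
              push_neg at hplt
              apply hutake
              have : (l.take ((n - (i + 1))+1)).get ⟨p, by simp [List.length_take]; omega⟩ = l.get ⟨p, hp⟩ := by
                simp [List.get_eq_getElem, List.getElem_take]
              rw [← hpu, ← this]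
              exact List.get_mem _ _
            refine ⟨n - p, by omega, ?_⟩
            rw [hDpos (n - p) (by omega) (by omega), Finset.mem_singleton, ← hpu]
            congr 1
            exact Fin.ext (by simp; omega)
      have hsum := card_filter_compl_aux (fun u => G.Adj v u) T
      rw [hdegcard] at hsum
      have hTκ : (T.filter (fun u => G.Adj v u)).card ≤ κ v := by
        have htakeeq : l.take ((n - (i + 1)) + 1) = l.take (n - (i + 1)) ++ [l.get ⟨(n - (i + 1)), hjn⟩] := by
          rw [← List.take_concat_get hjn, List.concat_eq_append]
          rfl
        have hTfil : T.filter (fun u => G.Adj v u)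
            = (l.take (n - (i + 1))).toFinset.filter (fun u => G.Adj v u) := by
          rw [hT, htakeeq, List.toFinset_append, Finset.filter_union]
          have hemp : ([l.get ⟨(n - (i + 1)), hjn⟩].toFinset.filter (fun u => G.Adj v u)) = ∅ := by
            simp [Finset.filter_singleton, hvv]
          rw [hemp, Finset.union_empty]
        rw [hTfil]
        have hndtake : (l.take (n - (i + 1))).Nodup := hnd.sublist (List.take_sublist _ _)
        have hndf := hndtake.filter (fun u => decide (G.Adj v u))
        have hfin : (l.take (n - (i + 1))).toFinset.filter (fun u => G.Adj v u)
            = ((l.take (n - (i + 1))).filter (fun u => decide (G.Adj v u))).toFinset := by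
          rw [List.toFinset_filter]
          simp
        rw [hfin, List.toFinset_card_of_nodup hndf]
        have := hdeg ⟨(n - (i + 1)), hjn⟩
        simpa [hvv] using this
      have hTle : (T.filter (fun u => G.Adj v u)).card ≤ G.degree v := by omega
      have hτ := h v
      rw [hBT]
      omega
end

section
/- If G is κ-degenerate and |E(G)| = Σ_{v ∈ V(G)} κ(v), then there exists a vertex v of G with deg_G(v) = κ(v). -/
open Finset

theorem stmt4 {V : Type*} [Fintype V] [DecidableEq V] (G : SimpleGraph V) [DecidableRel G.Adj]
    (κ : V → ℕ) (h : KDegenOn G κ Finset.univ) (he : G.edgeFinset.card = ∑ v : V, κ v)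
    (hne : Nonempty V) :
    ∃ v : V, G.degree v = κ v := by
  classical
  obtain ⟨l, hnd, hto, hback⟩ := h
  have hmem : ∀ v : V, v ∈ l := fun v => by
    rw [← List.mem_toFinset, hto]; exact mem_univ v
  set idx : V → ℕ := fun v => l.idxOf v with hidxdef
  have hidxlt : ∀ v, idx v < l.length := fun v => List.idxOf_lt_length_iff.2 (hmem v)
  have hgetidx : ∀ v, l.get ⟨idx v, hidxlt v⟩ = v := fun v => List.idxOf_get (hidxlt v)
  have hinj : ∀ a b : V, idx a = idx b → a = b := by
    intro a b hab
    have h1 := hgetidx a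
    have h2 := hgetidx b
    rw [← h1, ← h2]
    congr 1
    exact Fin.ext hab
  -- membership in take vs index
  have htake : ∀ (u : V) (i : ℕ), u ∈ l.take i ↔ idx u < i := by
    intro u i
    constructor
    · intro hu
      obtain ⟨j, hj, hjeq⟩ := List.mem_iff_getElem.1 hu
      have hj' : j < i := by
        simp [List.length_take] at hj; omega
      have hjl : j < l.length := by
        simp [List.length_take] at hj; omega
      have : (l.take i)[j] = l[j] := List.getElem_take
      rw [this] at hjeq
      have : idx u = j := by
        rw [← hjeq]
        exact List.Nodup.idxOf_getElem hnd j hjl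
      omega
    · intro hlt
      refine List.mem_iff_getElem.2 ⟨idx u, ?_, ?_⟩
      · simp [List.length_take]
        exact ⟨hlt, hidxlt u⟩
      · have : (l.take i)[idx u]'(by simp [List.length_take]; exact ⟨hlt, hidxlt u⟩) =
            l[idx u]'(hidxlt u) := List.getElem_take
        rw [this]
        exact List.getElem_idxOf (hidxlt u)
  set b : V → ℕ := fun v => (univ.filter (fun u => G.Adj v u ∧ idx u < idx v)).card with hbdef
  set f : V → ℕ := fun v => (univ.filter (fun u => G.Adj v u ∧ idx v < idx u)).card with hfdef
  -- b v ≤ κ v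
  have hble : ∀ v, b v ≤ κ v := by
    intro v
    have hi := hidxlt v
    have hb := hback ⟨idx v, hi⟩
    rw [show l.get ⟨idx v, hi⟩ = v from hgetidx v] at hb
    have hnds : ((l.take (idx v)).filter (fun u => decide (G.Adj v u))).Nodup :=
      (List.filter_sublist.trans (List.take_sublist _ _)).nodup hnd
    have hlen : ((l.take (idx v)).filter (fun u => decide (G.Adj v u))).length = b v := by
      rw [← List.toFinset_card_of_nodup hnds, hbdef]
      congr 1
      ext u
      simp only [List.mem_toFinset, List.mem_filter, mem_filter, mem_univ, true_and,
        decide_eq_true_eq, htake]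
      tauto
    calc b v = _ := hlen.symm
      _ ≤ κ v := hb
  -- degree split
  have hsplit : ∀ v, G.degree v = b v + f v := by
    intro v
    have hdeg : G.degree v = (univ.filter (fun u => G.Adj v u)).card := by
      rw [← SimpleGraph.neighborFinset_eq_filter]; rfl
    rw [hdeg, hbdef, hfdef]
    beta_reduce
    rw [← Finset.filter_filter, ← Finset.filter_filter]
    rw [← Finset.card_filter_add_card_filter_not (s := univ.filter (fun u => G.Adj v u))
      (p := fun u => idx u < idx v)]
    congr 1
    congr 1
    apply Finset.filter_congr
    intro u hu
    simp only [mem_filter, mem_univ, true_and] at hu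
    have hne' : idx u ≠ idx v := fun hh => G.ne_of_adj hu.symm (hinj u v hh)
    simp only [not_lt, eq_iff_iff]
    omega
  -- sum of b equals sum of f
  have hbf : ∑ v : V, b v = ∑ v : V, f v := by
    have key : ∀ x y : V, (G.Adj y x ∧ idx x < idx y) ↔ (G.Adj x y ∧ idx x < idx y) := by
      intro x y; rw [G.adj_comm]
    calc ∑ v : V, b v
        = ∑ v : V, ∑ u : V, (if G.Adj v u ∧ idx u < idx v then 1 else 0) := by
          exact Finset.sum_congr rfl fun v _ => Finset.card_filter _ _
      _ = ∑ u : V, ∑ v : V, (if G.Adj v u ∧ idx u < idx v then 1 else 0) := Finset.sum_comm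
      _ = ∑ u : V, ∑ v : V, (if G.Adj u v ∧ idx u < idx v then 1 else 0) := by
          refine Finset.sum_congr rfl fun u _ => Finset.sum_congr rfl fun v _ => ?_
          simp only [key]
      _ = ∑ v : V, f v := by
          exact (Finset.sum_congr rfl fun v _ => (Finset.card_filter _ _).symm)
  -- total
  have hdegsum : ∑ v : V, G.degree v = 2 * G.edgeFinset.card :=
    SimpleGraph.sum_degrees_eq_twice_card_edges G
  have hsumsplit : ∑ v : V, G.degree v = ∑ v : V, b v + ∑ v : V, f v := by
    rw [← Finset.sum_add_distrib]
    exact Finset.sum_congr rfl fun v _ => hsplit v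
  have hsumb : ∑ v : V, b v = ∑ v : V, κ v := by omega
  -- max vertex
  obtain ⟨vm, _, hvm⟩ := Finset.exists_max_image (univ : Finset V) idx univ_nonempty
  have hf0 : f vm = 0 := by
    rw [hfdef]
    simp only [Finset.card_eq_zero]
    apply Finset.filter_eq_empty_iff.2
    intro u _
    have := hvm u (mem_univ u)
    omega
  have hbm : b vm = κ vm := by
    by_contra hne'
    have hlt : b vm < κ vm := lt_of_le_of_ne (hble vm) hne'
    have := Finset.sum_lt_sum (fun v (_ : v ∈ univ) => hble v) ⟨vm, mem_univ vm, hlt⟩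
    omega
  exact ⟨vm, by have := hsplit vm; omega⟩
end

section
/- Let κ : V(G) → ℕ and suppose v is a vertex of G with deg_G(v) = κ(v). Then G is κ-degenerate if and only if G \ {v} is κ-degenerate (with κ restricted to V(G) \ {v}). -/
open Finset

lemma sublist_take_aux {α : Type*} {l' l : List α} (h : List.Sublist l' l) :
    ∀ i : Fin l'.length, ∃ j : Fin l.length,
      l.get j = l'.get i ∧ List.Sublist (l'.take i) (l.take j) := by
  induction h with
  | slnil => exact fun i => absurd i.2 (by simp)
  | @cons l₁ l₂ a h ih =>
    intro i
    obtain ⟨j, hj, hs⟩ := ih i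
    refine ⟨j.succ, ?_, ?_⟩
    · simpa using hj
    · simpa [List.take_succ_cons] using hs.cons a
  | @cons_cons l₁ l₂ a h ih =>
    rintro ⟨_ | i', hi⟩
    · exact ⟨⟨0, by simp⟩, rfl, by simp⟩
    · obtain ⟨j, hj, hs⟩ := ih ⟨i', by simpa using hi⟩
      refine ⟨j.succ, ?_, ?_⟩
      · simpa using hj
      · simpa [List.take_succ_cons] using hs.cons₂ a

theorem stmt5 {V : Type*} [Fintype V] [DecidableEq V] (G : SimpleGraph V) [DecidableRel G.Adj]
    (κ : V → ℕ) (v : V) (hv : G.degree v = κ v) :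
    KDegenOn G κ Finset.univ ↔ KDegenOn G κ (Finset.univ.erase v) := by
  constructor
  · rintro ⟨l, hnd, hfin, hcond⟩
    refine ⟨l.erase v, hnd.erase v, ?_, ?_⟩
    · ext x
      rw [List.mem_toFinset, hnd.mem_erase_iff, ← List.mem_toFinset, hfin]
      simp [and_comm]
    · intro i
      obtain ⟨j, hj, hs⟩ := sublist_take_aux (l.erase_sublist (a := v)) i
      calc ((((l.erase v).take i).filter
              (fun u => decide (G.Adj ((l.erase v).get i) u))).length)
          ≤ (((l.take j).filter
              (fun u => decide (G.Adj ((l.erase v).get i) u))).length) :=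
            (hs.filter _).length_le
        _ ≤ κ ((l.erase v).get i) := by rw [← hj]; exact hcond j
  · rintro ⟨l, hnd, hfin, hcond⟩
    have hvl : v ∉ l := by
      intro h
      have := List.mem_toFinset.2 h
      rw [hfin] at this
      simp at this
    have hvnl : v ∉ l := hvl
    refine ⟨l ++ [v], by simp [List.nodup_append, hnd, hvl]; exact fun a ha e => hvl (e ▸ ha), ?_, ?_⟩
    · ext x
      by_cases hx : x = v <;> simp [hx, hfin]
    · intro i
      have hlen : (l ++ [v]).length = l.length + 1 := by simp
      have hile : (i : ℕ) ≤ l.length := by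
        have := i.2
        simp only [List.length_append, List.length_singleton] at this
        omega
      rcases lt_or_eq_of_le hile with hi | hi
      · have hget : (l ++ [v]).get i = l.get ⟨i, hi⟩ := by
          rw [List.get_eq_getElem, List.get_eq_getElem, List.getElem_append_left hi]
        have htake : (l ++ [v]).take i = l.take i :=
          List.take_append_of_le_length (le_of_lt hi)
        rw [hget, htake]
        exact hcond ⟨i, hi⟩
      · have hget : (l ++ [v]).get i = v := by
          rw [List.get_eq_getElem]
          simp [hi]
        have htake : (l ++ [v]).take i = l := by
          rw [hi]
          simp
        rw [hget, htake]
        have h1 : (l.filter (fun u => decide (G.Adj v u))).toFinset.card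
            = (l.filter (fun u => decide (G.Adj v u))).length :=
          List.toFinset_card_of_nodup (hnd.filter _)
        rw [← h1, List.toFinset_filter, hfin]
        have h2 : (Finset.univ.erase v).filter (fun u => decide (G.Adj v u)) = G.neighborFinset v := by
          ext u
          simp only [Finset.mem_filter, Finset.mem_erase, Finset.mem_univ, true_and, and_true,
            decide_eq_true_eq, SimpleGraph.mem_neighborFinset]
          constructor
          · exact fun h => h.2
          · exact fun h => ⟨fun e => by subst e; exact G.irrefl h, h⟩
        rw [h2]
        exact le_of_eq (by rw [← hv]; rfl)
end

section
/- Let κ : V(G) → ℕ and suppose v is a vertex of G with 0 ≤ κ(v) − deg_G(v) ≤ Σ_{u ∈ V(G)} κ(u) − |E(G)|. Then G is κ-degenerate if and only if G \ {v} is κ-degenerate (with κ restricted to V(G) \ {v}). -/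
open Finset

lemma filter_adj_le_degree {V : Type*} [Fintype V] [DecidableEq V] (G : SimpleGraph V)
    [DecidableRel G.Adj] (v : V) (l : List V) (hn : l.Nodup) :
    (l.filter (fun u => decide (G.Adj v u))).length ≤ G.degree v := by
  have hnf := hn.filter (fun u => decide (G.Adj v u))
  rw [← List.toFinset_card_of_nodup hnf]
  rw [show G.degree v = (G.neighborFinset v).card from rfl]
  apply Finset.card_le_card
  intro u hu
  simp only [List.mem_toFinset, List.mem_filter, decide_eq_true_eq] at hu
  simpa using hu.2

theorem stmt7 {V : Type*} [Fintype V] [DecidableEq V] (G : SimpleGraph V) [DecidableRel G.Adj]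
    (κ : V → ℕ) (v : V)
    (hv₁ : 0 ≤ (κ v : ℤ) - G.degree v)
    (hv₂ : (κ v : ℤ) - G.degree v ≤ (∑ u : V, (κ u : ℤ)) - G.edgeFinset.card) :
    KDegenOn G κ Finset.univ ↔ KDegenOn G κ (Finset.univ.erase v) := by
  unfold KDegenOn
  constructor
  · rintro ⟨l, hn, ht, hd⟩
    refine ⟨l.erase v, hn.erase v, ?_, ?_⟩
    · ext a
      have : a ∈ l := by rw [← List.mem_toFinset, ht]; exact Finset.mem_univ a
      simp [List.mem_toFinset, List.Nodup.mem_erase_iff hn, this]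
    · intro i
      obtain ⟨j, hj, hs⟩ := sublist_take_aux (List.erase_sublist (a := v) (l := l)) i
      have h2 := hd j
      rw [hj] at h2
      exact le_trans (List.Sublist.length_le (hs.filter _)) h2
  · rintro ⟨l, hn, ht, hd⟩
    have hvl : v ∉ l := by
      intro h
      have := ht ▸ List.mem_toFinset.2 h
      simp at this
    refine ⟨l ++ [v], by simp [List.nodup_append, hn, hvl]; exact fun a ha h => hvl (h ▸ ha), ?_, ?_⟩
    · ext a
      by_cases h : a = v
      · simp [h]
      · simp [← List.mem_toFinset, ht, h]
    · intro i
      have hle : i.val ≤ l.length := Nat.lt_succ_iff.mp (by simpa using i.isLt)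
      rcases lt_or_eq_of_le hle with h | h
      · have hget : (l ++ [v]).get i = l.get ⟨i, h⟩ := by
          simp [List.get_eq_getElem]; exact List.getElem_append_left h
        have htake : (l ++ [v]).take i = l.take i :=
          List.take_append_of_le_length (le_of_lt h)
        rw [hget, htake]
        exact hd ⟨i, h⟩
      · have hget : (l ++ [v]).get i = v := by
          simp [List.get_eq_getElem, h]
        have htake : (l ++ [v]).take i = l := by
          rw [h]; exact List.take_left
        rw [hget, htake]
        have hκ : G.degree v ≤ κ v := by exact_mod_cast sub_nonneg.mp hv₁
        exact le_trans (filter_adj_le_degree G v l hn) hκ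
end

section
/- For every finite simple graph G and every non-negative integer k, there exists a k-degenerate induced subgraph H of G such that |V(H)| ≥ Σ_{v ∈ V(G)} min{1, (k+1)/(deg_G(v)+1)}. -/
open Finset

set_option linter.unusedSectionVars false
set_option linter.unusedVariables false
set_option maxHeartbeats 1000000

section AKSaux

variable {V : Type*} [Fintype V] [DecidableEq V] {n : ℕ}

def rk (A : Finset V) (v : V) (f : V ≃ Fin n) : ℕ :=
  (A.filter fun w => f w ≤ f v).card

def nextA (A : Finset V) (v : V) (f : V ≃ Fin n) : V :=
  if h : ((A.filter fun w => f v < f w).image f).Nonempty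
  then f.symm (((A.filter fun w => f v < f w).image f).min' h) else v

def prevA (A : Finset V) (v : V) (f : V ≃ Fin n) : V :=
  if h : ((A.filter fun w => f w < f v).image f).Nonempty
  then f.symm (((A.filter fun w => f w < f v).image f).max' h) else v

lemma nextA_spec {A : Finset V} {v : V} {f : V ≃ Fin n} (h : ∃ w ∈ A, f v < f w) :
    nextA A v f ∈ A ∧ f v < f (nextA A v f) ∧ ∀ w ∈ A, f v < f w → f (nextA A v f) ≤ f w := by
  obtain ⟨w0, hw0A, hw0⟩ := h
  have hB : ((A.filter fun w => f v < f w).image f).Nonempty :=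
    ⟨f w0, mem_image_of_mem f (mem_filter.2 ⟨hw0A, hw0⟩)⟩
  have hdef : nextA A v f = f.symm (((A.filter fun w => f v < f w).image f).min' hB) := by
    rw [nextA, dif_pos hB]
  obtain ⟨u, huB, hu⟩ := mem_image.1 (Finset.min'_mem _ hB)
  have hne : nextA A v f = u := by rw [hdef, ← hu, Equiv.symm_apply_apply]
  rw [hne]
  have huA := mem_filter.1 huB
  refine ⟨huA.1, huA.2, fun w hwA hw => ?_⟩
  have hmem : f w ∈ (A.filter fun w => f v < f w).image f :=
    mem_image_of_mem f (mem_filter.2 ⟨hwA, hw⟩)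
  have := Finset.min'_le _ _ hmem
  rwa [← hu] at this

lemma prevA_spec {A : Finset V} {v : V} {f : V ≃ Fin n} (h : ∃ w ∈ A, f w < f v) :
    prevA A v f ∈ A ∧ f (prevA A v f) < f v ∧ ∀ w ∈ A, f w < f v → f w ≤ f (prevA A v f) := by
  obtain ⟨w0, hw0A, hw0⟩ := h
  have hB : ((A.filter fun w => f w < f v).image f).Nonempty :=
    ⟨f w0, mem_image_of_mem f (mem_filter.2 ⟨hw0A, hw0⟩)⟩
  have hdef : prevA A v f = f.symm (((A.filter fun w => f w < f v).image f).max' hB) := by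
    rw [prevA, dif_pos hB]
  obtain ⟨u, huB, hu⟩ := mem_image.1 (Finset.max'_mem _ hB)
  have hne : prevA A v f = u := by rw [hdef, ← hu, Equiv.symm_apply_apply]
  rw [hne]
  have huA := mem_filter.1 huB
  refine ⟨huA.1, huA.2, fun w hwA hw => ?_⟩
  have hmem : f w ∈ (A.filter fun w => f w < f v).image f :=
    mem_image_of_mem f (mem_filter.2 ⟨hwA, hw⟩)
  have := Finset.le_max' _ _ hmem
  rwa [← hu] at this

lemma nextA_eq {A : Finset V} {v u : V} {f : V ≃ Fin n} (hu : u ∈ A) (h1 : f v < f u)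
    (h2 : ∀ w ∈ A, f v < f w → f u ≤ f w) : nextA A v f = u := by
  have hB : ((A.filter fun w => f v < f w).image f).Nonempty :=
    ⟨f u, mem_image_of_mem f (mem_filter.2 ⟨hu, h1⟩)⟩
  have hdef : nextA A v f = f.symm (((A.filter fun w => f v < f w).image f).min' hB) := by
    rw [nextA, dif_pos hB]
  have hval : ((A.filter fun w => f v < f w).image f).min' hB = f u := by
    apply le_antisymm
    · exact Finset.min'_le _ _ (mem_image_of_mem f (mem_filter.2 ⟨hu, h1⟩))
    · apply Finset.le_min'
      intro y hy
      obtain ⟨w, hwB, hw⟩ := mem_image.1 hy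
      have hwB := mem_filter.1 hwB
      rw [← hw]; exact h2 w hwB.1 hwB.2
  rw [hdef, hval, Equiv.symm_apply_apply]

lemma prevA_eq {A : Finset V} {v u : V} {f : V ≃ Fin n} (hu : u ∈ A) (h1 : f u < f v)
    (h2 : ∀ w ∈ A, f w < f v → f w ≤ f u) : prevA A v f = u := by
  have hB : ((A.filter fun w => f w < f v).image f).Nonempty :=
    ⟨f u, mem_image_of_mem f (mem_filter.2 ⟨hu, h1⟩)⟩
  have hdef : prevA A v f = f.symm (((A.filter fun w => f w < f v).image f).max' hB) := by
    rw [prevA, dif_pos hB]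
  have hval : ((A.filter fun w => f w < f v).image f).max' hB = f u := by
    apply le_antisymm
    · apply Finset.max'_le
      intro y hy
      obtain ⟨w, hwB, hw⟩ := mem_image.1 hy
      have hwB := mem_filter.1 hwB
      rw [← hw]; exact h2 w hwB.1 hwB.2
    · exact Finset.le_max' _ _ (mem_image_of_mem f (mem_filter.2 ⟨hu, h1⟩))
  rw [hdef, hval, Equiv.symm_apply_apply]

lemma swap_filter_insert {A : Finset V} {v u : V} {f : V ≃ Fin n}
    (hvA : v ∈ A) (hu : u ∈ A) (h1 : f v < f u)
    (h2 : ∀ w ∈ A, f v < f w → f u ≤ f w) :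
    (A.filter fun w => ((Equiv.swap v u).trans f) w ≤ ((Equiv.swap v u).trans f) v)
      = insert u (A.filter fun w => f w ≤ f v) := by
  have hvu : v ≠ u := fun h => absurd h1 (by rw [h]; exact lt_irrefl _)
  ext w
  simp only [mem_filter, mem_insert, Equiv.trans_apply, Equiv.swap_apply_left]
  by_cases hwv : w = v
  · subst hwv
    simp [Equiv.swap_apply_left, hvA, hvu]
  · by_cases hwu : w = u
    · subst hwu
      simp [Equiv.swap_apply_right, hu, le_of_lt h1]
    · rw [Equiv.swap_apply_of_ne_of_ne hwv hwu]
      constructor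
      · rintro ⟨hwA, hle⟩
        right
        refine ⟨hwA, ?_⟩
        by_contra hc
        have hlt : f v < f w := lt_of_not_ge hc
        have := h2 w hwA hlt
        have : f w = f u := le_antisymm hle this
        exact hwu (f.injective this)
      · rintro (h | ⟨hwA, hle⟩)
        · exact absurd h hwu
        · exact ⟨hwA, le_trans hle (le_of_lt h1)⟩

lemma swap_filter_erase {A : Finset V} {v u : V} {f : V ≃ Fin n}
    (hvA : v ∈ A) (hu : u ∈ A) (h1 : f u < f v)
    (h2 : ∀ w ∈ A, f w < f v → f w ≤ f u) :
    (A.filter fun w => ((Equiv.swap v u).trans f) w ≤ ((Equiv.swap v u).trans f) v)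
      = (A.filter fun w => f w ≤ f v).erase u := by
  have hvu : v ≠ u := fun h => absurd h1 (by rw [h]; exact lt_irrefl _)
  ext w
  simp only [mem_filter, mem_erase, Equiv.trans_apply, Equiv.swap_apply_left]
  by_cases hwv : w = v
  · subst hwv
    simp [Equiv.swap_apply_left, hvA, hvu]
  · by_cases hwu : w = u
    · subst hwu
      simp [Equiv.swap_apply_right, not_le.2 h1]
    · rw [Equiv.swap_apply_of_ne_of_ne hwv hwu]
      constructor
      · rintro ⟨hwA, hle⟩
        exact ⟨hwu, hwA, le_trans hle (le_of_lt h1)⟩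
      · rintro ⟨-, hwA, hle⟩
        have hne : f w ≠ f v := fun h => hwv (f.injective h)
        exact ⟨hwA, h2 w hwA (lt_of_le_of_ne hle hne)⟩

lemma fiber_step (A : Finset V) (v : V) (hvA : v ∈ A) (i : ℕ) (hi1 : 1 ≤ i)
    (hi2 : i + 1 ≤ A.card) :
    ((univ : Finset (V ≃ Fin n)).filter fun f => rk A v f = i).card
      = ((univ : Finset (V ≃ Fin n)).filter fun f => rk A v f = i + 1).card := by
  -- existence of an element above / below v
  have hexa : ∀ f : V ≃ Fin n, rk A v f = i → ∃ w ∈ A, f v < f w := by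
    intro f hf
    by_contra hc
    push_neg at hc
    have : A.filter (fun w => f w ≤ f v) = A :=
      filter_eq_self.2 fun w hw => hc w hw
    have : rk A v f = A.card := by rw [rk, this]
    omega
  have hexb : ∀ f : V ≃ Fin n, rk A v f = i + 1 → ∃ w ∈ A, f w < f v := by
    intro f hf
    have h2 : 1 < (A.filter fun w => f w ≤ f v).card := by rw [← rk]; omega
    obtain ⟨w, hw, hwv⟩ := Finset.exists_mem_ne h2 v
    have hw' := mem_filter.1 hw
    exact ⟨w, hw'.1, lt_of_le_of_ne hw'.2 (fun h => hwv (f.injective h))⟩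
  apply Finset.card_bij' (fun f _ => (Equiv.swap v (nextA A v f)).trans f)
      (fun g _ => (Equiv.swap v (prevA A v g)).trans g)
  · -- forward membership
    intro f hf
    rw [mem_filter] at hf ⊢
    obtain ⟨-, hf⟩ := hf
    obtain ⟨huA, hlt, hmin⟩ := nextA_spec (hexa f hf)
    refine ⟨mem_univ _, ?_⟩
    have hnotmem : nextA A v f ∉ A.filter (fun w => f w ≤ f v) :=
      fun h => absurd (mem_filter.1 h).2 (not_le.2 hlt)
    rw [rk, swap_filter_insert hvA huA hlt hmin, card_insert_of_notMem hnotmem, ← rk, hf]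
  · -- backward membership
    intro g hg
    rw [mem_filter] at hg ⊢
    obtain ⟨-, hg⟩ := hg
    obtain ⟨huA, hlt, hmax⟩ := prevA_spec (hexb g hg)
    refine ⟨mem_univ _, ?_⟩
    have hmem : prevA A v g ∈ A.filter (fun w => g w ≤ g v) :=
      mem_filter.2 ⟨huA, le_of_lt hlt⟩
    rw [rk, swap_filter_erase hvA huA hlt hmax, card_erase_of_mem hmem, ← rk, hg]
    omega
  · -- left inverse
    intro f hf
    rw [mem_filter] at hf
    obtain ⟨-, hf⟩ := hf
    obtain ⟨huA, hlt, hmin⟩ := nextA_spec (hexa f hf)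
    set u := nextA A v f with hu
    set g := (Equiv.swap v u).trans f with hg
    have hvu : v ≠ u := fun h => absurd hlt (by rw [h]; exact lt_irrefl _)
    have hprev : prevA A v g = u := by
      apply prevA_eq huA
      · show g u < g v
        simp only [hg, Equiv.trans_apply, Equiv.swap_apply_left, Equiv.swap_apply_right]
        exact hlt
      · intro w hwA hw
        by_cases hwv : w = v
        · subst hwv; exact absurd hw (lt_irrefl _)
        · by_cases hwu : w = u
          · subst hwu; exact le_refl _
          · simp only [hg, Equiv.trans_apply, Equiv.swap_apply_left,
              Equiv.swap_apply_right, Equiv.swap_apply_of_ne_of_ne hwv hwu] at hw ⊢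
            by_contra hc
            exact absurd (hmin w hwA (lt_of_not_ge hc)) (not_le.2 hw)
    rw [hprev]
    ext x
    simp [hg, Equiv.swap_apply_self]
  · -- right inverse
    intro g hg
    rw [mem_filter] at hg
    obtain ⟨-, hg⟩ := hg
    obtain ⟨huA, hlt, hmax⟩ := prevA_spec (hexb g hg)
    set u := prevA A v g with hu
    set f := (Equiv.swap v u).trans g with hf
    have hvu : v ≠ u := fun h => absurd hlt (by rw [h]; exact lt_irrefl _)
    have hnext : nextA A v f = u := by
      apply nextA_eq huA
      · show f v < f u
        simp only [hf, Equiv.trans_apply, Equiv.swap_apply_left, Equiv.swap_apply_right]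
        exact hlt
      · intro w hwA hw
        by_cases hwv : w = v
        · subst hwv; exact absurd hw (lt_irrefl _)
        · by_cases hwu : w = u
          · subst hwu; exact le_refl _
          · simp only [hf, Equiv.trans_apply, Equiv.swap_apply_left,
              Equiv.swap_apply_right, Equiv.swap_apply_of_ne_of_ne hwv hwu] at hw ⊢
            by_contra hc
            exact absurd (hmax w hwA (lt_of_not_ge hc)) (not_le.2 hw)
    rw [hnext]
    ext x
    simp [hf, Equiv.swap_apply_self]

lemma rk_pos {A : Finset V} {v : V} (hvA : v ∈ A) (f : V ≃ Fin n) : 1 ≤ rk A v f :=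
  card_pos.2 ⟨v, mem_filter.2 ⟨hvA, le_refl _⟩⟩

lemma rk_le {A : Finset V} {v : V} (f : V ≃ Fin n) : rk A v f ≤ A.card :=
  card_le_card (filter_subset _ _)

lemma fiber_const (A : Finset V) (v : V) (hvA : v ∈ A) :
    ∀ i, 1 ≤ i → i ≤ A.card →
    ((univ : Finset (V ≃ Fin n)).filter fun f => rk A v f = i).card
      = ((univ : Finset (V ≃ Fin n)).filter fun f => rk A v f = 1).card := by
  intro i
  induction i with
  | zero => intro h; omega
  | succ m ih =>
    intro h1 h2
    rcases Nat.eq_or_lt_of_le h1 with h | h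
    · rw [← h]
    · have hm1 : 1 ≤ m := by omega
      rw [← fiber_step A v hvA m hm1 (by omega)]
      exact ih hm1 (by omega)

lemma good_partition (A : Finset V) (v : V) (hvA : v ∈ A) (j : ℕ) (hj1 : 1 ≤ j)
    (hj : j ≤ A.card) :
    ((univ : Finset (V ≃ Fin n)).filter fun f => rk A v f ≤ j).card
      = j * ((univ : Finset (V ≃ Fin n)).filter fun f => rk A v f = 1).card := by
  have hsplit : ((univ : Finset (V ≃ Fin n)).filter fun f => rk A v f ≤ j)
      = (Icc 1 j).biUnion (fun i => (univ : Finset (V ≃ Fin n)).filter fun f => rk A v f = i) := by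
    ext f
    simp only [mem_filter, mem_univ, true_and, mem_biUnion, mem_Icc]
    constructor
    · intro h; exact ⟨rk A v f, ⟨rk_pos hvA f, h⟩, rfl⟩
    · rintro ⟨i, ⟨-, hij⟩, rfl⟩; exact hij
  rw [hsplit, card_biUnion]
  · calc ∑ i ∈ Icc 1 j, ((univ : Finset (V ≃ Fin n)).filter fun f => rk A v f = i).card
        = ∑ _i ∈ Icc 1 j,
            ((univ : Finset (V ≃ Fin n)).filter fun f => rk A v f = 1).card :=
          Finset.sum_congr rfl (fun i hi => by
            rw [mem_Icc] at hi
            exact fiber_const A v hvA i hi.1 (le_trans hi.2 hj))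
      _ = _ := by simp [sum_const, Nat.card_Icc, smul_eq_mul]
  · intro x hx y hy hxy
    apply disjoint_filter_filter'
    simp only [disjoint_iff_inf_le]
    intro f hf
    simp only [Set.mem_setOf_eq, Pi.inf_apply] at hf
    exact absurd (hf.1 ▸ hf.2 : x = y) hxy

lemma univ_count (A : Finset V) (v : V) (hvA : v ∈ A) :
    Fintype.card (V ≃ Fin n)
      = A.card * ((univ : Finset (V ≃ Fin n)).filter fun f => rk A v f = 1).card := by
  have h : ((univ : Finset (V ≃ Fin n)).filter fun f => rk A v f ≤ A.card)
      = (univ : Finset (V ≃ Fin n)) := filter_eq_self.2 fun f _ => rk_le f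
  have hc : 1 ≤ A.card := card_pos.2 ⟨v, hvA⟩
  have hg := good_partition (n := n) A v hvA A.card hc (le_refl _)
  rw [h] at hg
  rw [← card_univ, hg]

end AKSaux

section AKSgraph

variable {V : Type*} [Fintype V] [DecidableEq V] {n : ℕ}
variable (G : SimpleGraph V) [DecidableRel G.Adj]

lemma rk_insert_nbr (v : V) (f : V ≃ Fin n) :
    rk (insert v (G.neighborFinset v)) v f
      = ((univ : Finset V).filter fun u => G.Adj v u ∧ f u < f v).card + 1 := by
  have hset : (insert v (G.neighborFinset v)).filter (fun w => f w ≤ f v)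
      = insert v ((univ : Finset V).filter fun u => G.Adj v u ∧ f u < f v) := by
    ext w
    simp only [mem_filter, mem_insert, SimpleGraph.mem_neighborFinset, mem_univ, true_and]
    constructor
    · rintro ⟨h | h, hle⟩
      · exact Or.inl h
      · refine Or.inr ⟨h, lt_of_le_of_ne hle fun hh => G.ne_of_adj h (f.injective hh).symm⟩
    · rintro (rfl | ⟨ha, hlt⟩)
      · exact ⟨Or.inl rfl, le_refl _⟩
      · exact ⟨Or.inr ha, le_of_lt hlt⟩
  have hnm : v ∉ (univ : Finset V).filter fun u => G.Adj v u ∧ f u < f v := by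
    simp [SimpleGraph.irrefl]
  rw [rk, hset, card_insert_of_notMem hnm]

/-- per-vertex counting bound -/

lemma vertex_bound (k : ℕ) (v : V) :
    min 1 (((k : ℚ) + 1) / ((G.degree v : ℚ) + 1)) * (Fintype.card (V ≃ Fin n) : ℚ)
      ≤ (((univ : Finset (V ≃ Fin n)).filter fun f =>
          ((univ : Finset V).filter fun u => G.Adj v u ∧ f u < f v).card ≤ k).card : ℚ) := by
  set A := insert v (G.neighborFinset v) with hA
  have hvA : v ∈ A := mem_insert_self _ _
  have hcardA : A.card = G.degree v + 1 := by
    rw [hA, card_insert_of_notMem (SimpleGraph.notMem_neighborFinset_self G v),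
      G.card_neighborFinset_eq_degree, Nat.add_comm]
  have hfilter : ((univ : Finset (V ≃ Fin n)).filter fun f =>
      ((univ : Finset V).filter fun u => G.Adj v u ∧ f u < f v).card ≤ k)
      = ((univ : Finset (V ≃ Fin n)).filter fun f => rk A v f ≤ k + 1) := by
    apply filter_congr
    intro f _
    rw [rk_insert_nbr]
    omega
  rw [hfilter]
  by_cases hdk : G.degree v ≤ k
  · -- everything qualifies
    have hall : ((univ : Finset (V ≃ Fin n)).filter fun f => rk A v f ≤ k + 1)
        = (univ : Finset (V ≃ Fin n)) := by
      apply filter_eq_self.2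
      intro f _
      calc rk A v f ≤ A.card := rk_le f
        _ ≤ k + 1 := by omega
    rw [hall, card_univ]
    have : min 1 (((k : ℚ) + 1) / ((G.degree v : ℚ) + 1)) ≤ 1 := min_le_left _ _
    nlinarith [Nat.cast_nonneg (α := ℚ) (Fintype.card (V ≃ Fin n))]
  · -- k + 1 ≤ degree, exact count
    push_neg at hdk
    have hk1 : k + 1 ≤ A.card := by omega
    have hgood := good_partition (n := n) A v hvA (k + 1) (by omega) hk1
    have huniv := univ_count (n := n) A v hvA
    set c := ((univ : Finset (V ≃ Fin n)).filter fun f => rk A v f = 1).card with hc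
    have hdq : ((G.degree v : ℚ) + 1) > 0 := by positivity
    have hmin : min 1 (((k : ℚ) + 1) / ((G.degree v : ℚ) + 1))
        = ((k : ℚ) + 1) / ((G.degree v : ℚ) + 1) := by
      apply min_eq_right
      rw [div_le_one hdq]
      have : (k : ℚ) + 1 ≤ (G.degree v : ℚ) := by exact_mod_cast hdk
      linarith
    rw [hmin, hgood]
    rw [div_mul_eq_mul_div, div_le_iff₀ hdq]
    have h1 : (Fintype.card (V ≃ Fin n) : ℚ) = (A.card : ℚ) * c := by exact_mod_cast huniv
    have h2 : ((A.card : ℚ)) = (G.degree v : ℚ) + 1 := by exact_mod_cast hcardA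
    push_cast
    rw [h1, h2]
    ring_nf
    try exact le_refl _
    try linarith

lemma degenOn_good (k : ℕ) (f : V ≃ Fin n) :
    DegenOn G k ((univ : Finset V).filter fun v =>
      ((univ : Finset V).filter fun u => G.Adj v u ∧ f u < f v).card ≤ k) := by
  intro S hS hSne
  obtain ⟨v, hvS, hmax⟩ := S.exists_max_image (fun w => f w) hSne
  refine ⟨v, hvS, ?_⟩
  have hv : ((univ : Finset V).filter fun u => G.Adj v u ∧ f u < f v).card ≤ k :=
    (mem_filter.1 (hS hvS)).2
  refine le_trans (card_le_card ?_) hv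
  intro u hu
  rw [mem_filter] at hu ⊢
  obtain ⟨huS, hadj⟩ := hu
  refine ⟨mem_univ _, hadj, ?_⟩
  exact lt_of_le_of_ne (hmax u huS) fun h => G.ne_of_adj hadj (f.injective h).symm

end AKSgraph

theorem stmt9 {V : Type*} [Fintype V] [DecidableEq V] (G : SimpleGraph V) [DecidableRel G.Adj]
    (k : ℕ) :
    ∃ H : Finset V, DegenOn G k H ∧
      (∑ v : V, min 1 (((k : ℚ) + 1) / ((G.degree v : ℚ) + 1))) ≤ H.card := by
  classical
  set n := Fintype.card V with hn
  set E := (univ : Finset (V ≃ Fin n)) with hE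
  have hEne : E.Nonempty := ⟨Fintype.equivFin V, mem_univ _⟩
  set Hs : (V ≃ Fin n) → Finset V := fun f =>
    (univ : Finset V).filter fun v =>
      ((univ : Finset V).filter fun u => G.Adj v u ∧ f u < f v).card ≤ k with hHs
  have hswap : ∑ f ∈ E, ((Hs f).card : ℚ)
      = ∑ v : V, (((univ : Finset (V ≃ Fin n)).filter fun f =>
          ((univ : Finset V).filter fun u => G.Adj v u ∧ f u < f v).card ≤ k).card : ℚ) := by
    have : ∀ f : V ≃ Fin n, ((Hs f).card : ℚ)
        = ∑ v : V, (if ((univ : Finset V).filter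
            fun u => G.Adj v u ∧ f u < f v).card ≤ k then (1 : ℚ) else 0) := by
      intro f
      rw [hHs]
      rw [Finset.card_filter]
      push_cast
      rfl
    rw [Finset.sum_congr rfl fun f _ => this f, Finset.sum_comm]
    apply Finset.sum_congr rfl
    intro v _
    rw [Finset.card_filter]
    push_cast
    rfl
  have hlow : (∑ v : V, min 1 (((k : ℚ) + 1) / ((G.degree v : ℚ) + 1))) * (E.card : ℚ)
      ≤ ∑ f ∈ E, ((Hs f).card : ℚ) := by
    rw [hswap, Finset.sum_mul]
    apply Finset.sum_le_sum
    intro v _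
    have := vertex_bound (n := n) G k v
    rwa [hE, card_univ]
  have hexists : ∃ f ∈ E, (∑ v : V, min 1 (((k : ℚ) + 1) / ((G.degree v : ℚ) + 1)))
      ≤ ((Hs f).card : ℚ) := by
    apply Finset.exists_le_of_sum_le hEne
    rw [Finset.sum_const, nsmul_eq_mul, mul_comm]
    exact hlow
  obtain ⟨f, -, hf⟩ := hexists
  exact ⟨Hs f, degenOn_good G k f, hf⟩
end

section
/- Let G be a graph with threshold assignment τ, let D be a τ-dynamic monopoly, set H = G \ D, and let τ_max be the maximum threshold among vertices of H. Then Σ_{v ∈ H} τ(v) ≤ |E(G)| − |E(G[D])| − δ(G) + τ_max, where δ(G) is the minimum degree of G and G[D] is the subgraph induced by D. -/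
open Finset

open scoped Classical in
theorem stmt12 {V : Type*} [Fintype V] [DecidableEq V] (G : SimpleGraph V) [DecidableRel G.Adj]
    (τ : V → ℤ) (hτ : ∀ v, τ v ≤ G.degree v) (D : Finset V) (hD : DynMono G τ D)
    (hne : Dᶜ.Nonempty) :
    ∑ v ∈ Dᶜ, τ v ≤ (G.edgeFinset.card : ℤ)
      - ((G.induce (↑D : Set V)).edgeFinset.card : ℤ)
      - (G.minDegree : ℤ) + Dᶜ.sup' hne τ := by

  classical
  obtain ⟨k, Ds, h0, hdisj, hcover, hthr⟩ := hD
  have hex : ∀ v : V, ∃ i, i ≤ k ∧ v ∈ Ds i := by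
    intro v
    have hv : v ∈ (Finset.range (k + 1)).biUnion Ds := by rw [hcover]; exact mem_univ v
    simp only [mem_biUnion, mem_range, Nat.lt_succ_iff] at hv
    obtain ⟨i, hi, hvi⟩ := hv
    exact ⟨i, hi, hvi⟩
  set idx : V → ℕ := fun v => Nat.find (hex v) with hidxdef
  have hidx_spec : ∀ v, idx v ≤ k ∧ v ∈ Ds (idx v) := fun v => Nat.find_spec (hex v)
  have hidx_unique : ∀ v i, i ≤ k → v ∈ Ds i → idx v = i := by
    intro v i hi hv
    by_contra hne'
    exact (Finset.disjoint_left.mp (hdisj _ (hidx_spec v).1 _ hi hne')) (hidx_spec v).2 hv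
  have hidx_pos : ∀ v ∈ Dᶜ, 1 ≤ idx v := by
    intro v hv
    rcases Nat.eq_zero_or_pos (idx v) with h | h
    swap
    · exact h
    · exfalso
      have := (hidx_spec v).2
      rw [h, h0] at this
      exact (Finset.mem_compl.mp hv) this
  set earlier : V → Finset V := fun v => (Finset.range (idx v)).biUnion Ds with hearlierdef
  have hthr' : ∀ v ∈ Dᶜ, τ v ≤ (((earlier v).filter (fun u => G.Adj v u)).card : ℤ) := by
    intro v hv
    have h1 : 1 ≤ idx v := hidx_pos v hv
    have heq : idx v - 1 + 1 = idx v := Nat.succ_pred_eq_of_pos h1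
    have := hthr (idx v - 1) (by have := (hidx_spec v).1; omega) v (by rw [heq]; exact (hidx_spec v).2)
    rw [heq] at this
    exact this
  have hmem_earlier : ∀ v u, u ∈ earlier v → idx u < idx v := by
    intro v u hu
    simp only [hearlierdef, mem_biUnion, mem_range] at hu
    obtain ⟨j, hj, huj⟩ := hu
    have := hidx_unique u j (le_trans (le_of_lt hj) (hidx_spec v).1) huj
    omega
  set F : V → Finset (Sym2 V) :=
    fun v => ((earlier v).filter (fun u => G.Adj v u)).image (fun u => s(v, u)) with hFdef
  have hFcard : ∀ v, (F v).card = ((earlier v).filter (fun u => G.Adj v u)).card := by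
    intro v
    apply Finset.card_image_of_injOn
    intro u hu u' hu' heq
    rw [Sym2.eq_iff] at heq
    rcases heq with ⟨_, h⟩ | ⟨h1, h2⟩
    · exact h
    · exfalso
      have : G.Adj v u := (Finset.mem_filter.mp hu).2
      rw [h2] at this
      exact G.irrefl this
  have hFmem : ∀ v e, e ∈ F v → ∃ u, u ∈ earlier v ∧ G.Adj v u ∧ e = s(v, u) := by
    intro v e he
    simp only [hFdef, mem_image, mem_filter] at he
    obtain ⟨u, ⟨hu1, hu2⟩, hu3⟩ := he
    exact ⟨u, hu1, hu2, hu3.symm⟩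
  have hFsub : ∀ v, F v ⊆ G.edgeFinset := by
    intro v e he
    obtain ⟨u, _, hadj, rfl⟩ := hFmem v e he
    rw [SimpleGraph.mem_edgeFinset]
    exact hadj
  have hFdisj : ∀ v, v ∈ Dᶜ → ∀ v', v' ∈ Dᶜ → v ≠ v' → Disjoint (F v) (F v') := by
    intro v hv v' hv' hvv'
    rw [Finset.disjoint_left]
    intro e he he'
    obtain ⟨u, hu, hadj, rfl⟩ := hFmem v e he
    obtain ⟨u', hu', hadj', heq⟩ := hFmem v' _ he'
    rw [Sym2.eq_iff] at heq
    rcases heq with ⟨h1, _⟩ | ⟨h1, h2⟩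
    · exact hvv' h1
    · have hx := hmem_earlier v u hu
      have hy := hmem_earlier v' u' hu'
      rw [← h1] at hy
      rw [h2] at hx
      omega
  obtain ⟨w, hw, hwmax⟩ := Finset.exists_max_image Dᶜ idx hne
  set ED : Finset (Sym2 V) :=
    ((G.induce (↑D : Set V)).edgeFinset).image (Sym2.map Subtype.val) with hEDdef
  have hEDcard : ED.card = ((G.induce (↑D : Set V)).edgeFinset).card :=
    Finset.card_image_of_injective _ (Sym2.map.injective Subtype.val_injective)
  have hEDends : ∀ e ∈ ED, ∀ z ∈ e, z ∈ D := by
    intro e he z hz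
    simp only [hEDdef, mem_image] at he
    obtain ⟨e', he', rfl⟩ := he
    induction e' with
    | _ a b =>
      simp only [Sym2.map_pair_eq, Sym2.mem_iff] at hz
      rcases hz with rfl | rfl
      · exact a.2
      · exact b.2
  have hEDsub : ED ⊆ G.edgeFinset := by
    intro e he
    simp only [hEDdef, mem_image] at he
    obtain ⟨e', he', rfl⟩ := he
    rw [SimpleGraph.mem_edgeFinset] at he' ⊢
    induction e' with
    | _ a b =>
      rw [SimpleGraph.mem_edgeSet] at he'
      simpa using he'
  set Ew : Finset (Sym2 V) := G.incidenceFinset w with hEwdef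
  have hEwcard : Ew.card = G.degree w := by
    rw [hEwdef, SimpleGraph.incidenceFinset_eq_filter]
    rw [← SimpleGraph.incidenceFinset_eq_filter, SimpleGraph.card_incidenceFinset_eq_degree]
  have hEwmem : ∀ e, e ∈ Ew ↔ e ∈ G.edgeSet ∧ w ∈ e := by
    intro e
    rw [hEwdef, SimpleGraph.mem_incidenceFinset]
    rfl
  have hEwsub : Ew ⊆ G.edgeFinset := by
    intro e he
    rw [SimpleGraph.mem_edgeFinset]
    exact ((hEwmem e).mp he).1
  have hwD : w ∉ D := Finset.mem_compl.mp hw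
  -- the big union of counted edges over Dᶜ minus w
  set B : Finset (Sym2 V) := (Dᶜ.erase w).biUnion F with hBdef
  have hBcard : ∑ v ∈ Dᶜ.erase w, ((F v).card : ℤ) = (B.card : ℤ) := by
    rw [hBdef, Finset.card_biUnion]
    · push_cast
      rfl
    · intro x hx y hy hxy
      exact hFdisj x (Finset.mem_of_mem_erase hx) y (Finset.mem_of_mem_erase hy) hxy
  have hBsub : B ⊆ G.edgeFinset := by
    intro e he
    obtain ⟨v, _, hev⟩ := Finset.mem_biUnion.mp he
    exact hFsub v hev
  have hBED : Disjoint B ED := by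
    rw [Finset.disjoint_left]
    intro e heB heED
    obtain ⟨v, hv, hev⟩ := Finset.mem_biUnion.mp heB
    obtain ⟨u, _, _, rfl⟩ := hFmem v e hev
    have hvD : v ∈ D := hEDends _ heED v (by simp)
    exact (Finset.mem_compl.mp (Finset.mem_of_mem_erase hv)) hvD
  have hBEw : Disjoint B Ew := by
    rw [Finset.disjoint_left]
    intro e heB heEw
    obtain ⟨v, hv, hev⟩ := Finset.mem_biUnion.mp heB
    obtain ⟨u, hu, _, rfl⟩ := hFmem v e hev
    have hwe : w ∈ s(v, u) := ((hEwmem _).mp heEw).2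
    rw [Sym2.mem_iff] at hwe
    rcases hwe with rfl | rfl
    · exact (Finset.ne_of_mem_erase hv) rfl
    · have h1 := hmem_earlier v w hu
      have h2 := hwmax v (Finset.mem_of_mem_erase hv)
      omega
  have hEDEw : Disjoint ED Ew := by
    rw [Finset.disjoint_left]
    intro e heED heEw
    have hwe : w ∈ e := ((hEwmem _).mp heEw).2
    exact hwD (hEDends _ heED w hwe)
  -- counting
  have hcount : B.card + ED.card + Ew.card ≤ G.edgeFinset.card := by
    have h1 : (B ∪ ED ∪ Ew).card = B.card + ED.card + Ew.card := by
      rw [Finset.card_union_of_disjoint, Finset.card_union_of_disjoint hBED]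
      rw [Finset.disjoint_union_left]
      exact ⟨hBEw, hEDEw⟩
    rw [← h1]
    apply Finset.card_le_card
    intro e he
    rcases Finset.mem_union.mp he with he | he
    · rcases Finset.mem_union.mp he with he | he
      · exact hBsub he
      · exact hEDsub he
    · exact hEwsub he
  -- sum over Dᶜ \ {w}
  have hsum1 : ∑ v ∈ Dᶜ.erase w, τ v ≤ (B.card : ℤ) := by
    rw [← hBcard]
    apply Finset.sum_le_sum
    intro v hv
    rw [hFcard v]
    exact hthr' v (Finset.mem_of_mem_erase hv)
  have hsplit : ∑ v ∈ Dᶜ.erase w, τ v + τ w = ∑ v ∈ Dᶜ, τ v := Finset.sum_erase_add _ _ hw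
  have hτw : τ w ≤ Dᶜ.sup' hne τ := Finset.le_sup' τ hw
  have hdeg : G.minDegree ≤ G.degree w := G.minDegree_le_degree w
  have hcount' : (B.card : ℤ) + ((G.induce (↑D : Set V)).edgeFinset.card : ℤ) + (G.degree w : ℤ)
      ≤ (G.edgeFinset.card : ℤ) := by
    rw [← hEDcard, ← hEwcard]
    exact_mod_cast hcount
  have hdeg' : (G.minDegree : ℤ) ≤ (G.degree w : ℤ) := by exact_mod_cast hdeg
  linarith [hsum1, hsplit, hτw, hcount', hdeg']
end

section
/- Let κ : V(G) → ℕ be positive-valued on a graph G with m edges. Set α = max{deg(v) − κ(v) : v ∈ V(G)} and β = min{deg(v) − κ(v) : v ∈ V(G)}, and assume β > 0. Then every κ-degenerate induced subgraph H of G satisfies |V(H)| ≤ (m − δ(G) + α)/β, where δ(G) is the minimum degree of G. -/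
open Finset

section Aux13
variable {V : Type*} [Fintype V] [DecidableEq V] (G : SimpleGraph V) [DecidableRel G.Adj]

/-- edges of `G` inside `A` -/
private def inE (A : Finset V) : Finset (Sym2 V) := G.edgeFinset.filter (fun e => e ∈ A.sym2)


private theorem insert_step (w : V) (A : Finset V) :
    (inE G (insert w A)).card ≤ (inE G A).card + (A.filter (G.Adj w)).card := by
  have hsub : inE G (insert w A) ⊆ inE G A ∪ (A.filter (G.Adj w)).image (fun u => s(w,u)) := by
    intro e he
    simp only [inE, mem_filter] at he
    obtain ⟨heE, heA⟩ := he
    induction e with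
    | h a b =>
      rw [Finset.mk_mem_sym2_iff] at heA
      simp only [Finset.mem_insert] at heA
      have hadj : G.Adj a b := by rwa [SimpleGraph.mem_edgeFinset, SimpleGraph.mem_edgeSet] at heE
      rcases heA with ⟨ha | ha, hb | hb⟩
      · exact absurd (ha.trans hb.symm) hadj.ne
      · subst ha
        refine Finset.mem_union_right _ ?_
        exact Finset.mem_image.2 ⟨b, Finset.mem_filter.2 ⟨hb, hadj⟩, rfl⟩
      · subst hb
        refine Finset.mem_union_right _ ?_
        exact Finset.mem_image.2 ⟨a, Finset.mem_filter.2 ⟨ha, hadj.symm⟩, Sym2.eq_swap⟩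
      · exact Finset.mem_union_left _ (by simp [inE, heE, Finset.mk_mem_sym2_iff, ha, hb])
  calc (inE G (insert w A)).card ≤ _ := Finset.card_le_card hsub
    _ ≤ (inE G A).card + ((A.filter (G.Adj w)).image (fun u => s(w,u))).card := Finset.card_union_le _ _
    _ ≤ _ := by gcongr; exact Finset.card_image_le

private theorem lemB (κ : V → ℕ) : ∀ (l : List V), l.Nodup →
    (∀ i : Fin l.length,
      ((l.take i).filter (fun u => decide (G.Adj (l.get i) u))).length ≤ κ (l.get i)) →
    ∀ (h : l ≠ []),
    (inE G l.toFinset).card + κ (l.head h) ≤ ∑ v ∈ l.toFinset, κ v := by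
  intro l
  induction l using List.reverseRecOn with
  | nil => intro _ _ h; exact absurd rfl h
  | append_singleton l' w ih =>
    intro hnd hdeg h
    have hndl' : l'.Nodup := (List.nodup_append.mp hnd).1
    have hwl' : w ∉ l' := by
      have := List.nodup_append'.mp hnd
      intro hw
      exact this.2.2 hw (List.mem_singleton_self w)
    -- back-degree of w bound
    have hlast : (l'.filter (fun u => decide (G.Adj w u))).length ≤ κ w := by
      have := hdeg ⟨l'.length, by simp⟩
      simpa using this
    have hcard : (l'.toFinset.filter (G.Adj w)).card ≤ κ w := by
      have : (l'.toFinset.filter (G.Adj w)) = (l'.filter (fun u => decide (G.Adj w u))).toFinset := by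
        ext x; simp [List.mem_filter]
      rw [this, List.toFinset_card_of_nodup (hndl'.filter _)]
      exact hlast
    rcases eq_or_ne l' [] with rfl | hl'
    · -- singleton
      simp only [List.nil_append]
      have : inE G ({w} : Finset V) = ∅ := by
        apply Finset.eq_empty_of_forall_notMem
        intro e he
        simp only [inE, mem_filter] at he
        obtain ⟨heE, heA⟩ := he
        induction e with
        | h a b =>
          rw [Finset.mk_mem_sym2_iff] at heA
          simp only [Finset.mem_singleton] at heA
          have hadj : G.Adj a b := by rwa [SimpleGraph.mem_edgeFinset, SimpleGraph.mem_edgeSet] at heE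
          exact hadj.ne (heA.1.trans heA.2.symm)
      simp [this]
    · -- inductive step
      have hdeg' : ∀ i : Fin l'.length,
          ((l'.take i).filter (fun u => decide (G.Adj (l'.get i) u))).length ≤ κ (l'.get i) := by
        intro i
        have hi : (i : ℕ) < (l' ++ [w]).length := by simp
        have := hdeg ⟨i, hi⟩
        have hget : (l' ++ [w]).get ⟨i, hi⟩ = l'.get i := by
          simp [List.getElem_append_left i.isLt]
        have htake : (l' ++ [w]).take i = l'.take i := List.take_append_of_le_length (le_of_lt i.isLt)
        rwa [hget, htake] at this
      have hh : (l' ++ [w]).head h = l'.head hl' := List.head_append_of_ne_nil hl'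
      have hIH := ih hndl' hdeg' hl'
      have hins : (l' ++ [w]).toFinset = insert w l'.toFinset := by
        ext x; simp [List.toFinset_append, or_comm]
      have := insert_step G w l'.toFinset
      rw [hh, hins, Finset.sum_insert (by simpa using hwl')]
      omega

private theorem lemA (H : Finset V) :
    ∑ v ∈ H, G.degree v ≤ G.edgeFinset.card + (inE G H).card := by
  have hdeg : ∀ v, G.degree v = (G.edgeFinset.filter (fun e => v ∈ e)).card := by
    intro v
    rw [← SimpleGraph.card_incidenceFinset_eq_degree, SimpleGraph.incidenceFinset_eq_filter]
  calc ∑ v ∈ H, G.degree v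
      = ∑ v ∈ H, ∑ e ∈ G.edgeFinset, (if v ∈ e then 1 else 0) := by
        simp_rw [hdeg, Finset.card_filter]
    _ = ∑ e ∈ G.edgeFinset, (H.filter (fun v => v ∈ e)).card := by
        rw [Finset.sum_comm]
        simp_rw [Finset.card_filter]
    _ ≤ ∑ e ∈ G.edgeFinset, (1 + if e ∈ H.sym2 then 1 else 0) := by
        apply Finset.sum_le_sum
        intro e he
        induction e with
        | h a b =>
          have hadj : G.Adj a b := by rwa [SimpleGraph.mem_edgeFinset, SimpleGraph.mem_edgeSet] at he
          by_cases hmem : s(a,b) ∈ H.sym2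
          · rw [if_pos hmem]
            have : H.filter (fun v => v ∈ s(a,b)) ⊆ {a, b} := by
              intro x hx
              simp only [Finset.mem_filter, Sym2.mem_iff] at hx
              simp [hx.2]
            calc _ ≤ ({a,b} : Finset V).card := Finset.card_le_card this
              _ ≤ 2 := Finset.card_insert_le _ _ |>.trans (by simp)
          · rw [if_neg hmem]
            rw [Finset.mk_mem_sym2_iff] at hmem
            push_neg at hmem
            by_cases ha : a ∈ H
            · have hb : b ∉ H := hmem ha
              have : H.filter (fun v => v ∈ s(a,b)) ⊆ {a} := by
                intro x hx
                simp only [Finset.mem_filter, Sym2.mem_iff] at hx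
                rcases hx.2 with rfl | rfl
                · simp
                · exact absurd hx.1 hb
              simpa using Finset.card_le_card this
            · have : H.filter (fun v => v ∈ s(a,b)) ⊆ {b} := by
                intro x hx
                simp only [Finset.mem_filter, Sym2.mem_iff] at hx
                rcases hx.2 with rfl | rfl
                · exact absurd hx.1 ha
                · simp
              simpa using Finset.card_le_card this
    _ = G.edgeFinset.card + (inE G H).card := by
        rw [Finset.sum_add_distrib, Finset.sum_const, smul_eq_mul, mul_one]
        congr 1
        rw [inE, Finset.card_filter]

end Aux13

theorem stmt13 {V : Type*} [Fintype V] [DecidableEq V] [Nonempty V]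
    (G : SimpleGraph V) [DecidableRel G.Adj] (κ : V → ℕ) (hκ : ∀ v, 0 < κ v)
    (α β : ℤ)
    (hα : α = Finset.univ.sup' Finset.univ_nonempty (fun v => (G.degree v : ℤ) - κ v))
    (hβ : β = Finset.univ.inf' Finset.univ_nonempty (fun v => (G.degree v : ℤ) - κ v))
    (hβpos : 0 < β) :
    ∀ H : Finset V, KDegenOn G κ H →
      (H.card : ℚ) ≤ ((G.edgeFinset.card : ℚ) - G.minDegree + α) / β := by
  intro H hH
  obtain ⟨l, hnd, hlH, hdeg⟩ := hH
  have hβle : ∀ v : V, β ≤ (G.degree v : ℤ) - κ v := by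
    intro v; rw [hβ]; exact Finset.inf'_le _ (Finset.mem_univ v)
  have hαge : ∀ v : V, (G.degree v : ℤ) - κ v ≤ α := by
    intro v; rw [hα]; exact Finset.le_sup' (fun v => (G.degree v : ℤ) - κ v) (Finset.mem_univ v)
  have hδm : (G.minDegree : ℤ) ≤ (G.edgeFinset.card : ℤ) := by
    obtain ⟨v⟩ := ‹Nonempty V›
    have h1 : G.minDegree ≤ G.degree v := G.minDegree_le_degree v
    have h2 : G.degree v ≤ G.edgeFinset.card := by
      rw [← SimpleGraph.card_incidenceFinset_eq_degree]
      apply Finset.card_le_card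
      intro e he
      rw [SimpleGraph.mem_incidenceFinset] at he
      rw [SimpleGraph.mem_edgeFinset]
      exact G.incidenceSet_subset v he
    exact_mod_cast h1.trans h2
  have hαβ : β ≤ α := (hβle (Classical.arbitrary V)).trans (hαge _)
  -- main integer bound
  have key : β * H.card ≤ (G.edgeFinset.card : ℤ) - G.minDegree + α := by
    rcases H.eq_empty_or_nonempty with rfl | hne
    · simp only [Finset.card_empty, Nat.cast_zero, mul_zero]
      linarith [hβpos.le.trans hαβ]
    · have hlne : l ≠ [] := by
        rintro rfl; simp at hlH; exact hne.ne_empty hlH.symm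
      set v₁ := l.head hlne with hv₁
      have hv₁H : v₁ ∈ H := by
        rw [← hlH]; exact List.mem_toFinset.2 (List.head_mem hlne)
      have hB := lemB G κ l hnd hdeg hlne
      rw [hlH] at hB
      have hA := lemA G H
      have hsum1 : β * H.card ≤ ∑ v ∈ H, ((G.degree v : ℤ) - κ v) := by
        calc β * H.card = ∑ _v ∈ H, β := by rw [Finset.sum_const, nsmul_eq_mul, mul_comm]
          _ ≤ _ := Finset.sum_le_sum (fun v _ => hβle v)
      have hsum2 : ∑ v ∈ H, ((G.degree v : ℤ) - κ v)
          = (∑ v ∈ H, (G.degree v : ℤ)) - ∑ v ∈ H, (κ v : ℤ) := by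
        rw [Finset.sum_sub_distrib]
      have hAz : (∑ v ∈ H, (G.degree v : ℤ)) ≤ (G.edgeFinset.card : ℤ) + (inE G H).card := by
        push_cast
        exact_mod_cast hA
      have hBz : ((inE G H).card : ℤ) + κ v₁ ≤ ∑ v ∈ H, (κ v : ℤ) := by exact_mod_cast hB
      have hκv₁ : (G.degree v₁ : ℤ) - α ≤ κ v₁ := by linarith [hαge v₁]
      have hδv₁ : (G.minDegree : ℤ) ≤ G.degree v₁ := by exact_mod_cast G.minDegree_le_degree v₁
      linarith
  -- convert to ℚ
  have hβQ : (0 : ℚ) < (β : ℚ) := by exact_mod_cast hβpos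
  rw [le_div_iff₀ hβQ]
  have : ((β : ℚ)) * H.card ≤ (G.edgeFinset.card : ℚ) - G.minDegree + α := by exact_mod_cast key
  linarith
end

section
/- Let G be an r-regular graph on n vertices and let α_k(G) denote the maximum number of vertices of a k-degenerate induced subgraph of G, where 0 ≤ k < r. Then α_k(G) ≥ (k+1)n/(r+1). -/
open Finset

section Aux
variable {n m : ℕ} [NeZero m]

noncomputable def Tidx (T : Finset (Fin n)) (hT : T.card = m) (x : Fin n) (hx : x ∈ T) : Fin m :=
  (T.orderIsoOfFin hT).symm ⟨x, hx⟩

omit [NeZero m] in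
lemma Tidx_congr {T T' : Finset (Fin n)} (h : T = T') (hT : T.card = m) (hT' : T'.card = m)
    (x : Fin n) (hx : x ∈ T) (hx' : x ∈ T') : Tidx T hT x hx = Tidx T' hT' x hx' := by
  subst h; rfl

omit [NeZero m] in
lemma card_filter_lt_eq_Tidx (T : Finset (Fin n)) (hT : T.card = m) (x : Fin n) (hx : x ∈ T) :
    (T.filter (· < x)).card = (Tidx T hT x hx : ℕ) := by
  classical
  set e := T.orderIsoOfFin hT with he
  have himg : T.filter (· < x) =
      (Finset.univ.filter (fun i : Fin m => i < e.symm ⟨x, hx⟩)).image (fun i => (e i : Fin n)) := by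
    ext y
    simp only [mem_filter, mem_image, mem_univ, true_and]
    constructor
    · rintro ⟨hyT, hyx⟩
      refine ⟨e.symm ⟨y, hyT⟩, ?_, by simp⟩
      exact (OrderIso.lt_iff_lt e.symm).mpr (Subtype.mk_lt_mk.mpr hyx)
    · rintro ⟨i, hi, rfl⟩
      have : e i < e (e.symm ⟨x, hx⟩) := by exact_mod_cast (e.lt_iff_lt).2 hi
      rw [OrderIso.apply_symm_apply] at this
      exact ⟨(e i).2, this⟩
  rw [himg, Finset.card_image_of_injective _ (fun a b hab => e.injective (Subtype.ext hab))]
  have : (Finset.univ.filter (fun i : Fin m => i < e.symm ⟨x, hx⟩)) = Finset.Iio (e.symm ⟨x, hx⟩) := by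
    ext i; simp
  rw [this, Fin.card_Iio]
  rfl

noncomputable def cyc (T : Finset (Fin n)) (hT : T.card = m) (d : Fin m) : Equiv.Perm (Fin n) :=
  (Equiv.addRight d).extendDomain (T.orderIsoOfFin hT).toEquiv

lemma cyc_congr {T T' : Finset (Fin n)} (h : T = T') (hT : T.card = m) (hT' : T'.card = m)
    (d : Fin m) : cyc T hT d = cyc T' hT' d := by subst h; rfl

lemma cyc_apply (T : Finset (Fin n)) (hT : T.card = m) (d i : Fin m) :
    cyc T hT d ((T.orderIsoOfFin hT i : Fin n)) = (T.orderIsoOfFin hT (i + d) : Fin n) := by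
  have := Equiv.Perm.extendDomain_apply_image (Equiv.addRight d) (T.orderIsoOfFin hT).toEquiv i
  simpa [cyc] using this

lemma cyc_mem (T : Finset (Fin n)) (hT : T.card = m) (d : Fin m) {x : Fin n} (hx : x ∈ T) :
    cyc T hT d x ∈ T := by
  have hx' : x = ((T.orderIsoOfFin hT) ((T.orderIsoOfFin hT).symm ⟨x, hx⟩) : Fin n) := by simp
  rw [hx', cyc_apply]
  exact ((T.orderIsoOfFin hT) _).2

lemma Tidx_cyc (T : Finset (Fin n)) (hT : T.card = m) (d : Fin m) {x : Fin n} (hx : x ∈ T)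
    (hx' : cyc T hT d x ∈ T) :
    Tidx T hT (cyc T hT d x) hx' = Tidx T hT x hx + d := by
  have hx2 : x = ((T.orderIsoOfFin hT) (Tidx T hT x hx) : Fin n) := by simp [Tidx]
  have : cyc T hT d x = ((T.orderIsoOfFin hT) (Tidx T hT x hx + d) : Fin n) := by
    conv_lhs => rw [hx2]
    exact cyc_apply _ _ _ _
  unfold Tidx
  rw [show (⟨cyc T hT d x, hx'⟩ : {y // y ∈ T}) = (T.orderIsoOfFin hT) (Tidx T hT x hx + d) from
    Subtype.ext this]
  simp [Tidx]

lemma cyc_image (T : Finset (Fin n)) (hT : T.card = m) (d : Fin m) :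
    T.image (cyc T hT d) = T := by
  apply Finset.eq_of_subset_of_card_le
  · intro y hy
    rw [Finset.mem_image] at hy
    obtain ⟨x, hx, rfl⟩ := hy
    exact cyc_mem T hT d hx
  · rw [Finset.card_image_of_injective _ (cyc T hT d).injective]

end Aux

section Main
variable {V : Type*} [Fintype V] [DecidableEq V] (G : SimpleGraph V) [DecidableRel G.Adj]
  (r : ℕ) (hreg : G.IsRegularOfDegree r)
include hreg

lemma cardS (v : V) : (insert v (G.neighborFinset v)).card = r + 1 := by
  rw [Finset.card_insert_of_notMem (G.notMem_neighborFinset_self v),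
    G.card_neighborFinset_eq_degree, hreg v]

lemma cardT (v : V) (σ : V ≃ Fin (Fintype.card V)) :
    ((insert v (G.neighborFinset v)).image σ).card = r + 1 := by
  rw [Finset.card_image_of_injective _ σ.injective]; exact cardS G r hreg v

noncomputable def Fidx (v : V) (σ : V ≃ Fin (Fintype.card V)) : Fin (r + 1) :=
  Tidx _ (cardT G r hreg v σ) (σ v)
    (Finset.mem_image_of_mem σ (Finset.mem_insert_self v _))

lemma rank_eq_Fidx (v : V) (σ : V ≃ Fin (Fintype.card V)) :
    ((G.neighborFinset v).filter fun u => σ u < σ v).card = (Fidx G r hreg v σ : ℕ) := by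
  rw [Fidx, ← card_filter_lt_eq_Tidx _ (cardT G r hreg v σ), Finset.filter_image,
    Finset.card_image_of_injective _ σ.injective, Finset.filter_insert,
    if_neg (lt_irrefl (σ v))]

noncomputable def Phi (v : V) (d : Fin (r + 1)) (σ : V ≃ Fin (Fintype.card V)) :
    V ≃ Fin (Fintype.card V) :=
  σ.trans (cyc _ (cardT G r hreg v σ) d)

lemma T_Phi (v : V) (d : Fin (r + 1)) (σ : V ≃ Fin (Fintype.card V)) :
    (insert v (G.neighborFinset v)).image (Phi G r hreg v d σ) =
      (insert v (G.neighborFinset v)).image σ := by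
  have : ⇑(Phi G r hreg v d σ) = (cyc _ (cardT G r hreg v σ) d) ∘ σ := rfl
  rw [this, ← Finset.image_image, cyc_image]

lemma Fidx_Phi (v : V) (d : Fin (r + 1)) (σ : V ≃ Fin (Fintype.card V)) :
    Fidx G r hreg v (Phi G r hreg v d σ) = Fidx G r hreg v σ + d := by
  unfold Fidx
  have hmem' : (Phi G r hreg v d σ) v ∈ (insert v (G.neighborFinset v)).image σ := by
    rw [← T_Phi G r hreg v d σ]
    exact Finset.mem_image_of_mem _ (Finset.mem_insert_self v _)
  rw [Tidx_congr (T_Phi G r hreg v d σ) (cardT G r hreg v _) (cardT G r hreg v σ) _ _ hmem']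
  exact Tidx_cyc _ (cardT G r hreg v σ) d
    (Finset.mem_image_of_mem σ (Finset.mem_insert_self v _)) hmem'

lemma Phi_inj (v : V) (d : Fin (r + 1)) : Function.Injective (Phi G r hreg v d) := by
  intro σ σ' h
  have hT : (insert v (G.neighborFinset v)).image σ = (insert v (G.neighborFinset v)).image σ' := by
    rw [← T_Phi G r hreg v d σ, ← T_Phi G r hreg v d σ', h]
  have hc : cyc _ (cardT G r hreg v σ) d = cyc _ (cardT G r hreg v σ') d :=
    cyc_congr hT _ _ d
  ext x
  have hx : (Phi G r hreg v d σ) x = (Phi G r hreg v d σ') x := by rw [h]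
  have : cyc _ (cardT G r hreg v σ) d (σ x) = cyc _ (cardT G r hreg v σ') d (σ' x) := hx
  rw [hc] at this
  exact congrArg Fin.val ((cyc _ (cardT G r hreg v σ') d).injective this)

end Main

section Main2
variable {V : Type*} [Fintype V] [DecidableEq V] (G : SimpleGraph V) [DecidableRel G.Adj]
  (r : ℕ) (hreg : G.IsRegularOfDegree r)
include hreg

lemma fiber_card_eq (v : V) (i j : Fin (r + 1)) :
    (univ.filter (fun σ : V ≃ Fin (Fintype.card V) => Fidx G r hreg v σ = i)).card =
      (univ.filter (fun σ => Fidx G r hreg v σ = j)).card := by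
  have key : ∀ i j : Fin (r + 1),
      (univ.filter (fun σ : V ≃ Fin (Fintype.card V) => Fidx G r hreg v σ = i)).card ≤
        (univ.filter (fun σ => Fidx G r hreg v σ = j)).card := by
    intro i j
    apply Finset.card_le_card_of_injOn (Phi G r hreg v (j - i))
    · intro σ hσ
      simp only [Finset.mem_coe, Finset.mem_filter, Finset.mem_univ, true_and] at hσ ⊢
      rw [Fidx_Phi, hσ]
      abel
    · exact fun a _ b _ h => Phi_inj G r hreg v (j - i) h
  exact le_antisymm (key i j) (key j i)

lemma count_good (v : V) (k : ℕ) (hk : k ≤ r) :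
    (r + 1) * (univ.filter (fun σ : V ≃ Fin (Fintype.card V) =>
        ((G.neighborFinset v).filter fun u => σ u < σ v).card ≤ k)).card =
      (k + 1) * Fintype.card (V ≃ Fin (Fintype.card V)) := by
  set c := (univ.filter (fun σ : V ≃ Fin (Fintype.card V) =>
    Fidx G r hreg v σ = (0 : Fin (r + 1)))).card with hc
  have hfib : ∀ i : Fin (r + 1),
      (univ.filter (fun σ : V ≃ Fin (Fintype.card V) => Fidx G r hreg v σ = i)).card = c :=
    fun i => fiber_card_eq G r hreg v i 0
  have htot : Fintype.card (V ≃ Fin (Fintype.card V)) = (r + 1) * c := by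
    rw [← Finset.card_univ, Finset.card_eq_sum_card_fiberwise
      (f := Fidx G r hreg v) (t := Finset.univ) (fun σ _ => Finset.mem_univ _)]
    rw [Finset.sum_congr rfl (fun i _ => hfib i), Finset.sum_const, Finset.card_univ,
      Fintype.card_fin, smul_eq_mul]
  have hre : (univ.filter (fun σ : V ≃ Fin (Fintype.card V) =>
      ((G.neighborFinset v).filter fun u => σ u < σ v).card ≤ k)) =
      univ.filter (fun σ => (Fidx G r hreg v σ : ℕ) ≤ k) := by
    apply Finset.filter_congr
    intro σ _
    rw [rank_eq_Fidx G r hreg v σ]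
  have hcard : (Finset.univ.filter (fun i : Fin (r + 1) => (i : ℕ) ≤ k)).card = k + 1 := by
    rw [← Finset.card_range (k + 1)]
    refine Finset.card_bij (fun i _ => (i : ℕ)) ?_ ?_ ?_
    · intro a ha
      simp only [Finset.mem_filter, Finset.mem_univ, true_and] at ha
      simp only [Finset.mem_range]
      omega
    · intro a _ b _ h
      exact Fin.ext h
    · intro b hb
      simp only [Finset.mem_range] at hb
      refine ⟨⟨b, by omega⟩, ?_, rfl⟩
      simp only [Finset.mem_filter, Finset.mem_univ, true_and]
      omega
  have hgood : (univ.filter (fun σ : V ≃ Fin (Fintype.card V) =>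
      ((G.neighborFinset v).filter fun u => σ u < σ v).card ≤ k)).card = (k + 1) * c := by
    rw [hre, Finset.card_eq_sum_card_fiberwise (f := Fidx G r hreg v)
      (t := Finset.univ.filter (fun i : Fin (r + 1) => (i : ℕ) ≤ k))
      (fun σ hσ => by
        simp only [Finset.mem_coe, Finset.mem_filter, Finset.mem_univ, true_and] at hσ ⊢
        exact hσ)]
    have heach : ∀ i ∈ Finset.univ.filter (fun i : Fin (r + 1) => (i : ℕ) ≤ k),
        ((univ.filter (fun σ : V ≃ Fin (Fintype.card V) =>
          (Fidx G r hreg v σ : ℕ) ≤ k)).filter (fun σ => Fidx G r hreg v σ = i)).card = c := by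
      intro i hi
      simp only [Finset.mem_filter, Finset.mem_univ, true_and] at hi
      rw [Finset.filter_filter]
      have heq : (univ.filter fun σ : V ≃ Fin (Fintype.card V) =>
          (Fidx G r hreg v σ : ℕ) ≤ k ∧ Fidx G r hreg v σ = i) =
          univ.filter (fun σ => Fidx G r hreg v σ = i) := by
        apply Finset.filter_congr
        intro σ _
        exact ⟨fun h => h.2, fun h => ⟨by rw [h]; exact hi, h⟩⟩
      rw [heq, hfib]
    rw [Finset.sum_congr rfl heach, Finset.sum_const, smul_eq_mul, hcard]
  rw [hgood, htot]
  ring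

end Main2


theorem stmt14 {V : Type*} [Fintype V] [DecidableEq V] (G : SimpleGraph V) [DecidableRel G.Adj]
    (r k : ℕ) (hreg : G.IsRegularOfDegree r) (hk : k < r) :
    ∃ H : Finset V, DegenOn G k H ∧
      ((k : ℚ) + 1) * Fintype.card V / ((r : ℚ) + 1) ≤ H.card := by
  classical
  have hex : ∃ σ : V ≃ Fin (Fintype.card V), (k + 1) * Fintype.card V ≤
      (r + 1) * (univ.filter (fun v =>
        ((G.neighborFinset v).filter fun u => σ u < σ v).card ≤ k)).card := by
    have hne : (Finset.univ : Finset (V ≃ Fin (Fintype.card V))).Nonempty :=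
      ⟨Fintype.equivFin V, mem_univ _⟩
    have hsum : ∑ _σ : V ≃ Fin (Fintype.card V), (k + 1) * Fintype.card V ≤
        ∑ σ : V ≃ Fin (Fintype.card V), (r + 1) * (univ.filter (fun v =>
          ((G.neighborFinset v).filter fun u => σ u < σ v).card ≤ k)).card := by
      apply le_of_eq
      rw [Finset.sum_const, smul_eq_mul, Finset.card_univ, ← Finset.mul_sum]
      have hswap : ∑ σ : V ≃ Fin (Fintype.card V), (univ.filter (fun v =>
          ((G.neighborFinset v).filter fun u => σ u < σ v).card ≤ k)).card
          = ∑ v : V, (univ.filter (fun σ : V ≃ Fin (Fintype.card V) =>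
            ((G.neighborFinset v).filter fun u => σ u < σ v).card ≤ k)).card := by
        simp_rw [Finset.card_filter]
        exact Finset.sum_comm
      rw [hswap, Finset.mul_sum,
        Finset.sum_congr rfl (fun v _ => count_good G r hreg v k hk.le),
        Finset.sum_const, smul_eq_mul, Finset.card_univ]
      ring
    obtain ⟨σ, _, hσ⟩ := Finset.exists_le_of_sum_le hne hsum
    exact ⟨σ, hσ⟩
  obtain ⟨σ, hσ⟩ := hex
  refine ⟨univ.filter (fun v => ((G.neighborFinset v).filter fun u => σ u < σ v).card ≤ k),
    ?_, ?_⟩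
  · intro S hS hSne
    obtain ⟨v, hvS, hmax⟩ := Finset.exists_max_image S (fun v => σ v) hSne
    refine ⟨v, hvS, ?_⟩
    have hsub : S.filter (fun u => G.Adj v u) ⊆
        (G.neighborFinset v).filter (fun u => σ u < σ v) := by
      intro u hu
      rw [Finset.mem_filter] at hu ⊢
      refine ⟨(G.mem_neighborFinset v u).mpr hu.2, ?_⟩
      refine lt_of_le_of_ne (hmax u hu.1) (fun h => ?_)
      exact (SimpleGraph.Adj.ne hu.2) (σ.injective h).symm
    have hvH := hS hvS
    rw [Finset.mem_filter] at hvH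
    exact (Finset.card_le_card hsub).trans hvH.2
  · rw [div_le_iff₀ (by positivity : (0:ℚ) < (r:ℚ)+1)]
    have h2 : ((k:ℚ)+1) * (Fintype.card V : ℚ) ≤
        ((r:ℚ)+1) * ((univ.filter (fun v =>
          ((G.neighborFinset v).filter fun u => σ u < σ v).card ≤ k)).card : ℚ) := by
      exact_mod_cast hσ
    linarith [h2]
end
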